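/- For partitions λ and μ with μ ⊆ λ, the generalized (ninth variation) skew Schur function satisfies the Jacobi–Trudi type identity s_{λ/μ}(X) = det( h_{λ_i − μ_j − i + j}(τ^{μ_j − j + 1} X) )_{1 ≤ i,j ≤ l}, where l = ℓ(λ), h_r(τ^m X) = s_{(r)}(τ^m X) for r ≥ 1, h_0(τ^m X) = 1, and h_r(τ^m X) = 0 for r < 0. -/

import Mathlib

open Finset
open scoped Classical


/-- Boxes of the skew Young diagram of `lam/mu` (0-indexed rows and columns):
box `(i,j)` with `i < l` and `mu i ≤ j < lam i`. -/
def skewCells (lam mu : ℕ → ℕ) (l : ℕ) : Finset (ℕ × ℕ) :=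
  (Finset.range l ×ˢ Finset.range (lam 0)).filter fun p => mu p.1 ≤ p.2 ∧ p.2 < lam p.1

/-- Content of a box `(i,j)` is `j - i`. -/
def content (p : ℕ × ℕ) : ℤ := (p.2 : ℤ) - (p.1 : ℤ)

/-- The ninth variation (generalized) skew Schur function: the sum over semistandard
fillings of the cell set `C` with entries in `Fin n` of the product of the
content-dependent weights `X entry content`. -/
noncomputable def schurGen {R : Type*} [CommRing R] (n : ℕ) (C : Finset (ℕ × ℕ))
    (X : Fin n → ℤ → R) : R :=
  ∑ T ∈ Finset.univ.filter (fun T : {p // p ∈ C} → Fin n =>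
      (∀ p q : {p // p ∈ C}, (q : ℕ × ℕ).1 = (p : ℕ × ℕ).1 ∧
          (q : ℕ × ℕ).2 = (p : ℕ × ℕ).2 + 1 → T p ≤ T q) ∧
      (∀ p q : {p // p ∈ C}, (q : ℕ × ℕ).1 = (p : ℕ × ℕ).1 + 1 ∧
          (q : ℕ × ℕ).2 = (p : ℕ × ℕ).2 → T p < T q)),
    ∏ p : {p // p ∈ C}, X (T p) (content (p : ℕ × ℕ))

/-- Cells of a single row of `r` boxes, with contents `0, 1, …, r-1`. -/
def rowCells (r : ℕ) : Finset (ℕ × ℕ) := (Finset.range r).image fun j => (0, j)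

/-- Cells of a single column of `r` boxes, with contents `0, -1, …, -(r-1)`. -/
def colCells (r : ℕ) : Finset (ℕ × ℕ) := (Finset.range r).image fun i => (i, 0)

/-- `h_r(τ^m X)`: the generalized complete homogeneous function, a one-row
generalized Schur function with leftmost content `m`; it is `1` for `r = 0`
and `0` for `r < 0`. -/
noncomputable def hGen {R : Type*} [CommRing R] (n : ℕ) (r m : ℤ) (X : Fin n → ℤ → R) : R :=
  if r < 0 then 0 else schurGen n (rowCells r.toNat) fun k c => X k (m + c)

/-- `e_r(τ^m X)`: the generalized elementary function, a one-column generalized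
Schur function with topmost content `m`; it is `1` for `r = 0` and `0` for `r < 0`. -/
noncomputable def eGen {R : Type*} [CommRing R] (n : ℕ) (r m : ℤ) (X : Fin n → ℤ → R) : R :=
  if r < 0 then 0 else schurGen n (colCells r.toNat) fun k c => X k (m + c)

namespace JTaux

variable {R : Type*} [CommRing R]

/-- `X` with `ℕ`-indexed letters (junk value `1` out of range). -/
noncomputable def XN (n : ℕ) (X : Fin n → ℤ → R) (k : ℕ) (c : ℤ) : R :=
  if h : k < n then X ⟨k, h⟩ c else 1

@[simp] lemma XN_coe (n : ℕ) (X : Fin n → ℤ → R) (k : Fin n) (c : ℤ) :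
    XN n X (k : ℕ) c = X k c := by
  simp [XN]

/-- The letter of a path `g` at content `c`. -/
noncomputable def letterOf {n : ℕ} (g : Fin (n+1) → ℤ) (c : ℤ) : ℕ :=
  (Finset.univ.filter fun k : Fin n => g k.succ ≤ c).card

/-- Weight of a path. -/
noncomputable def wtp {n : ℕ} (X : Fin n → ℤ → R) (g : Fin (n+1) → ℤ) : R :=
  ∏ k : Fin n, ∏ c ∈ Finset.Ico (g k.castSucc) (g k.succ), X k c

/-- The finite set of monotone lattice paths from `a` to `b`. -/
noncomputable def pathsF (n : ℕ) (a b : ℤ) : Finset (Fin (n+1) → ℤ) :=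
  (Fintype.piFinset fun _ => Finset.Icc a b).filter
    fun g => Monotone g ∧ g 0 = a ∧ g (Fin.last n) = b

lemma mem_pathsF {n : ℕ} {a b : ℤ} {g : Fin (n+1) → ℤ} :
    g ∈ pathsF n a b ↔ Monotone g ∧ g 0 = a ∧ g (Fin.last n) = b := by
  simp only [pathsF, mem_filter, Fintype.mem_piFinset, mem_Icc]
  refine ⟨fun h => h.2, fun h => ⟨fun k => ⟨?_, ?_⟩, h⟩⟩
  · rw [← h.2.1]; exact h.1 (Fin.zero_le k)
  · rw [← h.2.2]; exact h.1 (Fin.le_last k)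

lemma card_univ_filter_lt {n : ℕ} (k : Fin n) :
    (Finset.univ.filter fun k' : Fin n => k' < k).card = (k : ℕ) := by
  have h : (Finset.univ.filter fun k' : Fin n => k' < k) = Finset.Iio k := by
    ext x; simp
  rw [h, Fin.card_Iio]


lemma fin_succ_le_castSucc {n : ℕ} {k k' : Fin n} (h : (k : ℕ) < (k' : ℕ)) :
    k.succ ≤ k'.castSucc := by
  rw [Fin.le_def]
  simp only [Fin.val_succ, Fin.coe_castSucc]
  omega

lemma fin_succ_le_succ {n : ℕ} {k k' : Fin n} (h : (k : ℕ) ≤ (k' : ℕ)) :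
    k.succ ≤ k'.succ := by
  rw [Fin.le_def]
  simp only [Fin.val_succ]
  omega

lemma fin_le_of_val {n : ℕ} {k k' : Fin n} (h : (k : ℕ) ≤ (k' : ℕ)) : k ≤ k' :=
  Fin.le_def.mpr h

lemma letterOf_eq {n : ℕ} {g : Fin (n+1) → ℤ} (hg : Monotone g) (k : Fin n) {c : ℤ}
    (h1 : g k.castSucc ≤ c) (h2 : c < g k.succ) : letterOf g c = (k : ℕ) := by
  rw [letterOf, ← card_univ_filter_lt k]
  congr 1
  ext k'
  simp only [mem_filter, mem_univ, true_and]
  constructor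
  · intro h
    by_contra hlt
    push_neg at hlt
    have : g k.succ ≤ g k'.succ := hg (fin_succ_le_succ (Fin.le_def.mp hlt))
    exact absurd (le_trans this h) (not_le.2 h2)
  · intro hlt
    have : g k'.succ ≤ g k.castSucc := hg (fin_succ_le_castSucc (Fin.lt_def.mp hlt))
    exact le_trans this h1

lemma letterOf_lt {n : ℕ} {g : Fin (n+1) → ℤ} (hg : Monotone g) {c : ℤ}
    (h1 : g 0 ≤ c) (h2 : c < g (Fin.last n)) : letterOf g c < n := by
  rcases n with _ | m
  · exact absurd (lt_of_le_of_lt h1 h2) (by simp [Fin.last])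
  · by_contra h
    push_neg at h
    have hcard : (Finset.univ.filter fun k : Fin (m+1) => g k.succ ≤ c).card = m + 1 := by
      refine le_antisymm (le_trans (card_filter_le _ _) (by simp)) ?_
      exact le_trans h (le_refl _)
    have huniv : (Finset.univ.filter fun k : Fin (m+1) => g k.succ ≤ c) = Finset.univ := by
      apply Finset.eq_univ_of_card
      simpa using hcard
    have hmem : (⟨m, Nat.lt_succ_self m⟩ : Fin (m+1)) ∈
        (Finset.univ.filter fun k : Fin (m+1) => g k.succ ≤ c) := by
      rw [huniv]; exact mem_univ _
    rw [mem_filter] at hmem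
    have : (⟨m, Nat.lt_succ_self m⟩ : Fin (m+1)).succ = Fin.last (m+1) := by
      apply Fin.ext; simp
    rw [this] at hmem
    exact absurd hmem.2 (not_le.2 h2)

lemma letterOf_spec {n : ℕ} {g : Fin (n+1) → ℤ} (hg : Monotone g) {c : ℤ}
    (h1 : g 0 ≤ c) (h2 : c < g (Fin.last n)) :
    ∃ hk : letterOf g c < n,
      g (Fin.castSucc ⟨letterOf g c, hk⟩) ≤ c ∧ c < g (Fin.succ ⟨letterOf g c, hk⟩) := by
  have hk := letterOf_lt hg h1 h2
  refine ⟨hk, ?_, ?_⟩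
  · -- g castSucc ≤ c
    rcases Nat.eq_zero_or_pos (letterOf g c) with hz | hpos
    · have hzz : Fin.castSucc (⟨letterOf g c, hk⟩ : Fin n) = 0 := by
        apply Fin.ext; simp [hz]
      rw [hzz]; exact h1
    · have hs : letterOf g c - 1 < n := by omega
      have hmem : (⟨letterOf g c - 1, hs⟩ : Fin n) ∈
          (Finset.univ.filter fun k : Fin n => g k.succ ≤ c) := by
        by_contra hnot
        have hsub : (Finset.univ.filter fun k : Fin n => g k.succ ≤ c) ⊆
            Finset.Iio (⟨letterOf g c - 1, hs⟩ : Fin n) := by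
          intro x hx
          rw [mem_filter] at hx
          rw [mem_Iio]
          by_contra hge
          push_neg at hge
          refine hnot (mem_filter.2 ⟨mem_univ _, le_trans (hg (fin_succ_le_succ ?_)) hx.2⟩)
          exact Fin.le_def.mp hge
        have hcard := Finset.card_le_card hsub
        rw [Fin.card_Iio] at hcard
        have : letterOf g c ≤ letterOf g c - 1 := hcard
        omega
      rw [mem_filter] at hmem
      have heq : g (Fin.castSucc (⟨letterOf g c, hk⟩ : Fin n)) =
          g (Fin.succ (⟨letterOf g c - 1, hs⟩ : Fin n)) := by
        congr 1; apply Fin.ext; simp; omega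
      rw [heq]; exact hmem.2
  · -- c < g succ
    by_contra hle
    push_neg at hle
    have hsub : Finset.Iic (⟨letterOf g c, hk⟩ : Fin n) ⊆
        (Finset.univ.filter fun k : Fin n => g k.succ ≤ c) := by
      intro x hx
      rw [mem_Iic] at hx
      exact mem_filter.2 ⟨mem_univ _, le_trans (hg (fin_succ_le_succ (Fin.le_def.mp hx))) hle⟩
    have hcard := Finset.card_le_card hsub
    rw [Fin.card_Iic] at hcard
    have : letterOf g c + 1 ≤ letterOf g c := hcard
    omega

lemma letterOf_mono {n : ℕ} (g : Fin (n+1) → ℤ) {c c' : ℤ} (h : c ≤ c') :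
    letterOf g c ≤ letterOf g c' := by
  apply Finset.card_le_card
  intro k hk
  rw [mem_filter] at hk ⊢
  exact ⟨hk.1, le_trans hk.2 h⟩

/-- An initial-segment lemma for downward-closed subsets of `Ico a b` in `ℤ`. -/
lemma seg {S : Finset ℤ} {a b : ℤ} (hS : S ⊆ Finset.Ico a b)
    (dc : ∀ x ∈ Finset.Ico a b, ∀ y ∈ S, x ≤ y → x ∈ S) :
    S = Finset.Ico a (a + S.card) := by
  ext x
  simp only [mem_Ico]
  constructor
  · intro hx
    have hx' := hS hx
    rw [mem_Ico] at hx'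
    refine ⟨hx'.1, ?_⟩
    have hsub : Finset.Ico a (x+1) ⊆ S := by
      intro y hy
      rw [mem_Ico] at hy
      exact dc y (mem_Ico.2 ⟨hy.1, by omega⟩) x hx (by omega)
    have hc := Finset.card_le_card hsub
    rw [Int.card_Ico] at hc
    omega
  · rintro ⟨hax, hxc⟩
    by_contra hx
    have hsub : S ⊆ Finset.Ico a x := by
      intro y hy
      have hy' := hS hy
      rw [mem_Ico] at hy' ⊢
      refine ⟨hy'.1, ?_⟩
      by_contra hle
      push_neg at hle
      rcases lt_or_ge x b with hxb | hxb
      · exact hx (dc x (mem_Ico.2 ⟨hax, hxb⟩) y hy hle)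
      · omega
    have hc := Finset.card_le_card hsub
    rw [Int.card_Ico] at hc
    omega

/-- The path determined by a letter function `f` on contents in `[a,b)`. -/
noncomputable def pathOf (n : ℕ) (f : ℤ → ℕ) (a b : ℤ) : Fin (n+1) → ℤ :=
  fun k => a + ((Finset.Ico a b).filter fun c => f c < (k : ℕ)).card

lemma pathOf_zero (n : ℕ) (f : ℤ → ℕ) (a b : ℤ) : pathOf n f a b 0 = a := by
  simp [pathOf]

lemma pathOf_monotone (n : ℕ) (f : ℤ → ℕ) (a b : ℤ) : Monotone (pathOf n f a b) := by
  intro k k' hkk'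
  simp only [pathOf]
  have : ((Finset.Ico a b).filter fun c => f c < (k : ℕ)) ⊆
      ((Finset.Ico a b).filter fun c => f c < (k' : ℕ)) := by
    intro c hc
    rw [mem_filter] at hc ⊢
    exact ⟨hc.1, lt_of_lt_of_le hc.2 (Fin.le_def.mp hkk')⟩
  have := Finset.card_le_card this
  omega

lemma pathOf_last (n : ℕ) (f : ℤ → ℕ) {a b : ℤ} (hab : a ≤ b)
    (hf : ∀ c ∈ Finset.Ico a b, f c < n) : pathOf n f a b (Fin.last n) = b := by
  have h : ((Finset.Ico a b).filter fun c => f c < ((Fin.last n : Fin (n+1)) : ℕ)) =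
      Finset.Ico a b := by
    apply Finset.filter_eq_self.2
    intro c hc
    simpa using hf c hc
  rw [pathOf, h, Int.card_Ico]
  omega

lemma pathOf_mem (n : ℕ) (f : ℤ → ℕ) {a b : ℤ} (hab : a ≤ b)
    (hf : ∀ c ∈ Finset.Ico a b, f c < n) : pathOf n f a b ∈ pathsF n a b :=
  mem_pathsF.2 ⟨pathOf_monotone n f a b, pathOf_zero n f a b, pathOf_last n f hab hf⟩

lemma pathOf_congr (n : ℕ) {f f' : ℤ → ℕ} (a b : ℤ)
    (h : ∀ c ∈ Finset.Ico a b, f c = f' c) : pathOf n f a b = pathOf n f' a b := by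
  funext k
  simp only [pathOf]
  have heq : ((Finset.Ico a b).filter fun c => f c < (k : ℕ)) =
      ((Finset.Ico a b).filter fun c => f' c < (k : ℕ)) := by
    apply Finset.filter_congr
    intro c hc
    rw [h c hc]
  rw [heq]

lemma seg_filter (n : ℕ) {f : ℤ → ℕ} {a b : ℤ}
    (hmono : ∀ c c', c ∈ Finset.Ico a b → c' ∈ Finset.Ico a b → c ≤ c' → f c ≤ f c')
    (m : ℕ) :
    ((Finset.Ico a b).filter fun c => f c < m) =
      Finset.Ico a (a + ((Finset.Ico a b).filter fun c => f c < m).card) := by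
  apply seg (Finset.filter_subset _ _)
  intro x hx y hy hxy
  rw [mem_filter] at hy ⊢
  exact ⟨hx, lt_of_le_of_lt (hmono x y hx hy.1 hxy) hy.2⟩

lemma pathOf_ge (n : ℕ) (f : ℤ → ℕ) (a b : ℤ) (k : Fin (n+1)) : a ≤ pathOf n f a b k := by
  rw [pathOf]
  omega

lemma pathOf_le (n : ℕ) (f : ℤ → ℕ) {a b : ℤ} (hab : a ≤ b) (k : Fin (n+1)) :
    pathOf n f a b k ≤ b := by
  rw [pathOf]
  have := Finset.card_le_card (Finset.filter_subset (fun c => f c < (k : ℕ)) (Finset.Ico a b))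
  rw [Int.card_Ico] at this
  omega

lemma pathOf_lt_iff (n : ℕ) {f : ℤ → ℕ} {a b : ℤ}
    (hmono : ∀ c c', c ∈ Finset.Ico a b → c' ∈ Finset.Ico a b → c ≤ c' → f c ≤ f c')
    (k : Fin (n+1)) {c : ℤ} (hc : c ∈ Finset.Ico a b) :
    c < pathOf n f a b k ↔ f c < (k : ℕ) := by
  have hseg := seg_filter n hmono (k : ℕ)
  constructor
  · intro h
    by_contra hcon
    have hnot : c ∉ (Finset.Ico a b).filter (fun c => f c < (k : ℕ)) := by
      rw [mem_filter]
      tauto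
    rw [hseg, mem_Ico] at hnot
    push_neg at hnot
    have hac : a ≤ c := (mem_Ico.1 hc).1
    rw [pathOf] at h
    omega
  · intro h
    have hmm : c ∈ (Finset.Ico a b).filter (fun c => f c < (k : ℕ)) := mem_filter.2 ⟨hc, h⟩
    rw [hseg, mem_Ico] at hmm
    rw [pathOf]
    omega

lemma letterOf_pathOf (n : ℕ) {f : ℤ → ℕ} {a b : ℤ}
    (hmono : ∀ c c', c ∈ Finset.Ico a b → c' ∈ Finset.Ico a b → c ≤ c' → f c ≤ f c')
    (hf : ∀ c ∈ Finset.Ico a b, f c < n) {c : ℤ} (hc : c ∈ Finset.Ico a b) :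
    letterOf (pathOf n f a b) c = f c := by
  have hfc := hf c hc
  have hcc := mem_Ico.1 hc
  have hcs : pathOf n f a b (Fin.castSucc ⟨f c, hfc⟩) ≤ c := by
    set t := (Finset.Ico a b).filter (fun c' => f c' < f c) with ht
    have hseg : t = Finset.Ico a (a + (t.card : ℤ)) := by
      rw [ht]; exact seg_filter n hmono (f c)
    have hnot : c ∉ t := by
      rw [ht, mem_filter]
      simp
    rw [hseg, mem_Ico] at hnot
    push_neg at hnot
    have hval : pathOf n f a b (Fin.castSucc ⟨f c, hfc⟩) = a + (t.card : ℤ) := by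
      simp only [pathOf, Fin.coe_castSucc, ht]
    rw [hval]
    exact hnot hcc.1
  have hsucc : c < pathOf n f a b (Fin.succ ⟨f c, hfc⟩) := by
    set t := (Finset.Ico a b).filter (fun c' => f c' < f c + 1) with ht
    have hseg : t = Finset.Ico a (a + (t.card : ℤ)) := by
      rw [ht]; exact seg_filter n hmono (f c + 1)
    have hmemt : c ∈ t := by
      rw [ht, mem_filter]
      exact ⟨hc, by omega⟩
    rw [hseg, mem_Ico] at hmemt
    have hval : pathOf n f a b (Fin.succ ⟨f c, hfc⟩) = a + (t.card : ℤ) := by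
      simp only [pathOf, Fin.val_succ, ht]
    rw [hval]
    exact hmemt.2
  have := letterOf_eq (pathOf_monotone n f a b) ⟨f c, hfc⟩ hcs hsucc
  simpa using this

lemma pathOf_letterOf {n : ℕ} {a b : ℤ} {g : Fin (n+1) → ℤ} (hg : g ∈ pathsF n a b) :
    pathOf n (fun c => letterOf g c) a b = g := by
  obtain ⟨hm, h0, hl⟩ := mem_pathsF.1 hg
  funext k
  have key : ∀ c ∈ Finset.Ico a b, (letterOf g c < (k : ℕ) ↔ c < g k) := by
    intro c hc
    rw [mem_Ico] at hc
    obtain ⟨hk', hle, hlt⟩ := letterOf_spec hm (h0 ▸ hc.1) (hl ▸ hc.2)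
    constructor
    · intro h
      refine lt_of_lt_of_le hlt (hm ?_)
      rw [Fin.le_def]
      simp only [Fin.val_succ]
      omega
    · intro h
      by_contra hh
      push_neg at hh
      have hgk : g k ≤ g (Fin.castSucc ⟨letterOf g c, hk'⟩) := by
        refine hm ?_
        rw [Fin.le_def]
        simp only [Fin.coe_castSucc]
        omega
      exact absurd (le_trans hgk hle) (not_le.2 h)
  have hIco : ((Finset.Ico a b).filter fun c => letterOf g c < (k : ℕ)) = Finset.Ico a (g k) := by
    ext c
    simp only [mem_filter, mem_Ico]
    constructor
    · rintro ⟨⟨ha1, ha2⟩, h3⟩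
      exact ⟨ha1, (key c (mem_Ico.2 ⟨ha1, ha2⟩)).1 h3⟩
    · rintro ⟨ha1, h2⟩
      have hcb : c < b := lt_of_lt_of_le h2 (hl ▸ hm (Fin.le_last k))
      exact ⟨⟨ha1, hcb⟩, (key c (mem_Ico.2 ⟨ha1, hcb⟩)).2 h2⟩
  have hak : a ≤ g k := h0 ▸ hm (Fin.zero_le k)
  rw [pathOf, hIco, Int.card_Ico]
  omega

lemma wtp_eq {n : ℕ} (X : Fin n → ℤ → R) {g : Fin (n+1) → ℤ} (hm : Monotone g) :
    wtp X g = ∏ c ∈ Finset.Ico (g 0) (g (Fin.last n)), XN n X (letterOf g c) c := by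
  have hun : (Finset.univ : Finset (Fin n)).biUnion
      (fun k => Finset.Ico (g k.castSucc) (g k.succ)) = Finset.Ico (g 0) (g (Fin.last n)) := by
    ext c
    simp only [mem_biUnion, mem_univ, true_and, mem_Ico]
    constructor
    · rintro ⟨k, hk⟩
      exact ⟨le_trans (hm (Fin.zero_le _)) hk.1, lt_of_lt_of_le hk.2 (hm (Fin.le_last _))⟩
    · rintro ⟨h1, h2⟩
      obtain ⟨hk, hle, hlt⟩ := letterOf_spec hm h1 h2
      exact ⟨⟨letterOf g c, hk⟩, hle, hlt⟩
  have hdisj : ∀ k ∈ (Finset.univ : Finset (Fin n)), ∀ k' ∈ (Finset.univ : Finset (Fin n)),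
      k ≠ k' → Disjoint (Finset.Ico (g k.castSucc) (g k.succ))
        (Finset.Ico (g k'.castSucc) (g k'.succ)) := by
    intro k _ k' _ hne
    rw [Finset.disjoint_left]
    intro c hc hc'
    rw [mem_Ico] at hc hc'
    rcases lt_or_gt_of_ne hne with h | h
    · have : g k.succ ≤ g k'.castSucc := hm (fin_succ_le_castSucc (Fin.lt_def.mp h))
      omega
    · have : g k'.succ ≤ g k.castSucc := hm (fin_succ_le_castSucc (Fin.lt_def.mp h))
      omega
  rw [← hun, Finset.prod_biUnion hdisj, wtp]
  apply Finset.prod_congr rfl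
  intro k _
  apply Finset.prod_congr rfl
  intro c hc
  rw [mem_Ico] at hc
  rw [letterOf_eq hm k hc.1 hc.2, XN_coe]

/-- Interval-swap identity for products. -/
lemma four (F : ℤ → R) {a b a' b' c0 : ℤ} (h1 : a ≤ c0) (h2 : c0 ≤ b) (h3 : a' ≤ c0)
    (h4 : c0 ≤ b') :
    (∏ c ∈ Finset.Ico a b', F c) * ∏ c ∈ Finset.Ico a' b, F c =
      (∏ c ∈ Finset.Ico a b, F c) * ∏ c ∈ Finset.Ico a' b', F c := by
  have e1 : ∏ c ∈ Finset.Ico a b', F c =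
      (∏ c ∈ Finset.Ico a c0, F c) * ∏ c ∈ Finset.Ico c0 b', F c := by
    rw [← Finset.prod_union (Finset.Ico_disjoint_Ico_consecutive a c0 b'),
      Finset.Ico_union_Ico_eq_Ico h1 h4]
  have e2 : ∏ c ∈ Finset.Ico a' b, F c =
      (∏ c ∈ Finset.Ico a' c0, F c) * ∏ c ∈ Finset.Ico c0 b, F c := by
    rw [← Finset.prod_union (Finset.Ico_disjoint_Ico_consecutive a' c0 b),
      Finset.Ico_union_Ico_eq_Ico h3 h2]
  have e3 : ∏ c ∈ Finset.Ico a b, F c =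
      (∏ c ∈ Finset.Ico a c0, F c) * ∏ c ∈ Finset.Ico c0 b, F c := by
    rw [← Finset.prod_union (Finset.Ico_disjoint_Ico_consecutive a c0 b),
      Finset.Ico_union_Ico_eq_Ico h1 h2]
  have e4 : ∏ c ∈ Finset.Ico a' b', F c =
      (∏ c ∈ Finset.Ico a' c0, F c) * ∏ c ∈ Finset.Ico c0 b', F c := by
    rw [← Finset.prod_union (Finset.Ico_disjoint_Ico_consecutive a' c0 b'),
      Finset.Ico_union_Ico_eq_Ico h3 h4]
  rw [e1, e2, e3, e4]
  ring

/-- Monotonicity on an interval from single steps. -/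
lemma stepMono {a b : ℤ} {f : ℤ → ℕ} (hstep : ∀ c, a ≤ c → c + 1 < b → f c ≤ f (c+1)) :
    ∀ c c', c ∈ Finset.Ico a b → c' ∈ Finset.Ico a b → c ≤ c' → f c ≤ f c' := by
  have key : ∀ m : ℕ, ∀ c, a ≤ c → c + m < b → f c ≤ f (c + m) := by
    intro m
    induction m with
    | zero => intro c _ _; simp
    | succ p ih =>
      intro c hc hcb
      have h1 : f c ≤ f (c + p) := ih c hc (by push_cast at hcb ⊢; omega)
      have h2 : f (c + p) ≤ f (c + p + 1) := hstep (c + p) (by omega) (by push_cast at hcb ⊢; omega)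
      have : c + ((p : ℤ) + 1) = c + p + 1 := by ring
      rw [show ((p + 1 : ℕ) : ℤ) = (p : ℤ) + 1 by push_cast; ring, this]
      exact le_trans h1 h2
  intro c c' hc hc' hcc
  rw [mem_Ico] at hc hc'
  have : c' = c + ((c' - c).toNat : ℤ) := by omega
  rw [this]
  exact key _ c hc.1 (by omega)


lemma mem_rowCells {s : ℕ} {p : ℕ × ℕ} : p ∈ rowCells s ↔ p.1 = 0 ∧ p.2 < s := by
  constructor
  · intro hp
    rw [rowCells, mem_image] at hp
    obtain ⟨j, hj, rfl⟩ := hp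
    exact ⟨rfl, by simpa using hj⟩
  · rintro ⟨h1, h2⟩
    rw [rowCells, mem_image]
    exact ⟨p.2, by simpa using h2, by rw [← h1]⟩

variable {R : Type*} [CommRing R]

/-- The letter function of a one-row filling. -/
noncomputable def rowF {s : ℕ} {n : ℕ} (T : {p // p ∈ rowCells s} → Fin n) (m : ℤ) :
    ℤ → ℕ := fun c =>
  if h : ((0 : ℕ), (c - m).toNat) ∈ rowCells s then (T ⟨_, h⟩ : ℕ) else 0

lemma rowF_mem {s n : ℕ} (T : {p // p ∈ rowCells s} → Fin n) (m : ℤ) {c : ℤ}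
    (hc : c ∈ Finset.Ico m (m + s)) :
    ∃ h : ((0 : ℕ), (c - m).toNat) ∈ rowCells s,
      rowF T m c = (T ⟨_, h⟩ : ℕ) ∧ ((c - m).toNat : ℤ) = c - m := by
  rw [mem_Ico] at hc
  have h : ((0 : ℕ), (c - m).toNat) ∈ rowCells s := by
    rw [mem_rowCells]
    exact ⟨rfl, by omega⟩
  exact ⟨h, by rw [rowF, dif_pos h], by omega⟩

set_option maxHeartbeats 1000000 in
theorem hGen_eq (n : ℕ) (X : Fin n → ℤ → R) (r m : ℤ) :
    hGen n r m X = ∑ g ∈ pathsF n m (m + r), wtp X g := by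
  by_cases hr : r < 0
  · rw [hGen, if_pos hr]
    have hempty : pathsF n m (m + r) = ∅ := by
      rw [Finset.eq_empty_iff_forall_notMem]
      intro g hg
      obtain ⟨hm, h0, hl⟩ := mem_pathsF.1 hg
      have := hm (Fin.zero_le (Fin.last n))
      rw [h0, hl] at this
      omega
    rw [hempty]
    simp
  · rw [hGen, if_neg hr]
    push_neg at hr
    set s := r.toNat with hs
    have hsr : (s : ℤ) = r := by omega
    rw [show m + r = m + (s : ℤ) by omega]
    rw [schurGen]
    -- basic facts about fillings in the filter set
    have hTfact : ∀ T : {p // p ∈ rowCells s} → Fin n,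
        T ∈ Finset.univ.filter (fun T : {p // p ∈ rowCells s} → Fin n =>
          (∀ p q : {p // p ∈ rowCells s}, (q : ℕ × ℕ).1 = (p : ℕ × ℕ).1 ∧ (q : ℕ × ℕ).2 = (p : ℕ × ℕ).2 + 1 → T p ≤ T q) ∧
          (∀ p q : {p // p ∈ rowCells s}, (q : ℕ × ℕ).1 = (p : ℕ × ℕ).1 + 1 ∧ (q : ℕ × ℕ).2 = (p : ℕ × ℕ).2 → T p < T q)) →
        (∀ c c', c ∈ Finset.Ico m (m + (s:ℤ)) → c' ∈ Finset.Ico m (m + (s:ℤ)) → c ≤ c' →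
          rowF T m c ≤ rowF T m c') ∧
        (∀ c ∈ Finset.Ico m (m + (s:ℤ)), rowF T m c < n) := by
      intro T hT
      rw [mem_filter] at hT
      obtain ⟨-, hrow, -⟩ := hT
      constructor
      · apply stepMono
        intro c hc hc1
        obtain ⟨h1, e1, v1⟩ := rowF_mem T m (c := c) (mem_Ico.2 ⟨hc, by omega⟩)
        obtain ⟨h2, e2, v2⟩ := rowF_mem T m (c := c + 1) (mem_Ico.2 ⟨by omega, hc1⟩)
        rw [e1, e2]
        have : T ⟨_, h1⟩ ≤ T ⟨_, h2⟩ := by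
          apply hrow
          constructor
          · rfl
          · simp only
            omega
        exact this
      · intro c hc
        obtain ⟨h1, e1, v1⟩ := rowF_mem T m hc
        rw [e1]
        exact (T ⟨_, h1⟩).isLt
    apply Finset.sum_bij (i := fun T _ => pathOf n (rowF T m) m (m + (s : ℤ)))
    · -- membership
      intro T hT
      obtain ⟨hmono, hlt⟩ := hTfact T hT
      exact pathOf_mem n _ (by omega) hlt
    · -- injectivity
      intro T1 h1 T2 h2 heq
      obtain ⟨hm1, hl1⟩ := hTfact T1 h1
      obtain ⟨hm2, hl2⟩ := hTfact T2 h2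
      funext p
      obtain ⟨⟨p1, p2⟩, hp⟩ := p
      obtain ⟨hp1, hp2⟩ := mem_rowCells.1 hp
      subst hp1
      have hcmem : m + (p2 : ℤ) ∈ Finset.Ico m (m + (s:ℤ)) := by
        rw [mem_Ico]; omega
      have k1 := letterOf_pathOf n hm1 hl1 hcmem
      have k2 := letterOf_pathOf n hm2 hl2 hcmem
      rw [heq] at k1
      have : rowF T1 m (m + (p2:ℤ)) = rowF T2 m (m + (p2:ℤ)) := by rw [← k1, ← k2]
      obtain ⟨hh1, ee1, -⟩ := rowF_mem T1 m hcmem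
      obtain ⟨hh2, ee2, -⟩ := rowF_mem T2 m hcmem
      rw [ee1, ee2] at this
      have hsimp : (m + (p2:ℤ) - m).toNat = p2 := by omega
      apply Fin.val_injective
      simp only [hsimp] at this
      convert this
    · -- surjectivity
      intro g hg
      obtain ⟨hmg, h0g, hlg⟩ := mem_pathsF.1 hg
      have hkey : ∀ p : {p // p ∈ rowCells s}, letterOf g (m + ((p : ℕ × ℕ).2 : ℤ)) < n := by
        intro p
        obtain ⟨hp1, hp2⟩ := mem_rowCells.1 p.2
        apply letterOf_lt hmg (by rw [h0g]; omega)
        rw [hlg]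
        omega
      refine ⟨fun p => ⟨letterOf g (m + ((p : ℕ × ℕ).2 : ℤ)), hkey p⟩, ?_, ?_⟩
      · rw [mem_filter]
        refine ⟨mem_univ _, ?_, ?_⟩
        · intro p q ⟨hq1, hq2⟩
          have : (m + ((p : ℕ × ℕ).2 : ℤ)) ≤ (m + ((q : ℕ × ℕ).2 : ℤ)) := by
            rw [hq2]; push_cast; omega
          exact letterOf_mono g this
        · intro p q ⟨hq1, hq2⟩
          exfalso
          have := (mem_rowCells.1 p.2).1
          have := (mem_rowCells.1 q.2).1
          omega
      · -- pathOf of the letters equals g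
        have hcongr : ∀ c ∈ Finset.Ico m (m + (s:ℤ)),
            rowF (fun p : {p // p ∈ rowCells s} =>
              (⟨letterOf g (m + ((p : ℕ × ℕ).2 : ℤ)), hkey p⟩ : Fin n)) m c = letterOf g c := by
          intro c hc
          obtain ⟨h1, e1, v1⟩ := rowF_mem (fun p : {p // p ∈ rowCells s} =>
              (⟨letterOf g (m + ((p : ℕ × ℕ).2 : ℤ)), hkey p⟩ : Fin n)) m hc
          rw [e1]
          simp only
          congr 1
          omega
        rw [pathOf_congr n _ _ hcongr]
        exact pathOf_letterOf hg
    · -- weights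
      intro T hT
      obtain ⟨hmono, hlt⟩ := hTfact T hT
      have hpmem := pathOf_mem n (rowF T m) (a := m) (b := m + (s:ℤ)) (by omega) hlt
      obtain ⟨hmg, h0g, hlg⟩ := mem_pathsF.1 hpmem
      rw [wtp_eq X hmg, h0g, hlg]
      rw [Finset.univ_eq_attach]
      apply Finset.prod_bij (i := fun (p : {p // p ∈ rowCells s}) _ => m + ((p : ℕ × ℕ).2 : ℤ))
      · intro p _
        obtain ⟨hp1, hp2⟩ := mem_rowCells.1 p.2
        rw [mem_Ico]
        omega
      · intro p _ q _ h
        have e1 := (mem_rowCells.1 p.2).1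
        have e2 := (mem_rowCells.1 q.2).1
        apply Subtype.ext
        apply Prod.ext
        · rw [e1, e2]
        · omega
      · intro c hc
        obtain ⟨h1, e1, v1⟩ := rowF_mem T m hc
        refine ⟨⟨_, h1⟩, mem_attach _ _, ?_⟩
        show m + (((c - m).toNat : ℕ) : ℤ) = c
        omega
      · intro p _
        obtain ⟨⟨p1, p2⟩, hp⟩ := p
        obtain ⟨hp1, hp2⟩ := mem_rowCells.1 hp
        subst hp1
        have hcmem : m + (p2 : ℤ) ∈ Finset.Ico m (m + (s:ℤ)) := by rw [mem_Ico]; omega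
        have hlet := letterOf_pathOf n hmono hlt hcmem
        rw [hlet]
        obtain ⟨hh, ee, -⟩ := rowF_mem T m hcmem
        rw [ee]
        have hsimp : (m + (p2:ℤ) - m).toNat = p2 := by omega
        simp only [hsimp]
        rw [XN_coe]
        have hcontent : content ((0 : ℕ), p2) = (p2 : ℤ) := by simp [content]
        rw [hcontent]

/-! ### Crossing families and the tail-swap involution -/

lemma min'_congr {α : Type*} [LinearOrder α] {s t : Finset α} (h : s = t) (hs : s.Nonempty)
    (ht : t.Nonempty) : s.min' hs = t.min' ht := by subst h; rfl

lemma prod_pair_swap {ι : Type*} [Fintype ι] (F F' : ι → R) {a0 b0 : ι} (hne : a0 ≠ b0)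
    (hpair : F a0 * F b0 = F' a0 * F' b0) (hother : ∀ a, a ≠ a0 → a ≠ b0 → F a = F' a) :
    ∏ a, F a = ∏ a, F' a := by
  classical
  have hb0 : b0 ∈ Finset.univ.erase a0 := Finset.mem_erase.2 ⟨hne.symm, mem_univ _⟩
  rw [← Finset.mul_prod_erase Finset.univ F (mem_univ a0),
    ← Finset.mul_prod_erase Finset.univ F' (mem_univ a0),
    ← Finset.mul_prod_erase _ F hb0, ← Finset.mul_prod_erase _ F' hb0,
    ← mul_assoc, ← mul_assoc, hpair]
  congr 1
  apply Finset.prod_congr rfl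
  intro a ha
  rw [Finset.mem_erase] at ha
  obtain ⟨hab, ha⟩ := ha
  rw [Finset.mem_erase] at ha
  exact hother a ha.1 hab

section Families

variable {n l : ℕ}

def share (G : Fin l → Fin (n+1) → ℤ) (a b : Fin l) (k : Fin n) : Prop :=
  G a k.castSucc ≤ G b k.succ ∧ G b k.castSucc ≤ G a k.succ

def CrossF (G : Fin l → Fin (n+1) → ℤ) : Prop := ∃ k a b, a ≠ b ∧ share G a b k

def onPt (G : Fin l → Fin (n+1) → ℤ) (a : Fin l) (k : Fin n) (c : ℤ) : Prop :=
  G a k.castSucc ≤ c ∧ c ≤ G a k.succ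

noncomputable def lvlF (G : Fin l → Fin (n+1) → ℤ) : Finset (Fin n) :=
  Finset.univ.filter fun k => ∃ a b, a ≠ b ∧ share G a b k

lemma mem_lvlF {G : Fin l → Fin (n+1) → ℤ} {k : Fin n} :
    k ∈ lvlF G ↔ ∃ a b, a ≠ b ∧ share G a b k := by
  rw [lvlF, mem_filter]
  simp

lemma lvlF_ne {G : Fin l → Fin (n+1) → ℤ} (hc : CrossF G) : (lvlF G).Nonempty := by
  obtain ⟨k, a, b, hab, hs⟩ := hc
  exact ⟨k, mem_filter.2 ⟨mem_univ _, a, b, hab, hs⟩⟩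

noncomputable def k0 (G : Fin l → Fin (n+1) → ℤ) (hc : CrossF G) : Fin n :=
  (lvlF G).min' (lvlF_ne hc)

lemma k0_mem (G : Fin l → Fin (n+1) → ℤ) (hc : CrossF G) :
    ∃ a b, a ≠ b ∧ share G a b (k0 G hc) := by
  have h : k0 G hc ∈ lvlF G := Finset.min'_mem _ _
  exact mem_lvlF.1 h

lemma k0_min (G : Fin l → Fin (n+1) → ℤ) (hc : CrossF G) (k : Fin n)
    (h : ∃ a b, a ≠ b ∧ share G a b k) : k0 G hc ≤ k :=
  Finset.min'_le (s := lvlF G) _ (mem_lvlF.2 h)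

noncomputable def ptsF (G : Fin l → Fin (n+1) → ℤ) (hc : CrossF G) : Finset ℤ :=
  ((Finset.univ : Finset (Fin l)).biUnion fun a =>
      Finset.Icc (G a (k0 G hc).castSucc) (G a (k0 G hc).succ)).filter
    fun c => ∃ a b, a ≠ b ∧ onPt G a (k0 G hc) c ∧ onPt G b (k0 G hc) c

lemma mem_ptsF {G : Fin l → Fin (n+1) → ℤ} {hc : CrossF G} {c : ℤ} :
    c ∈ ptsF G hc ↔ ∃ a b, a ≠ b ∧ onPt G a (k0 G hc) c ∧ onPt G b (k0 G hc) c := by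
  rw [ptsF, mem_filter]
  constructor
  · exact fun h => h.2
  · intro h
    refine ⟨?_, h⟩
    obtain ⟨a, b, hab, h1, h2⟩ := h
    exact Finset.mem_biUnion.2 ⟨a, mem_univ _, mem_Icc.2 h1⟩

lemma ptsF_ne {G : Fin l → Fin (n+1) → ℤ} (hG : ∀ a, Monotone (G a)) (hc : CrossF G) :
    (ptsF G hc).Nonempty := by
  obtain ⟨a, b, hab, hs⟩ := k0_mem G hc
  set K := k0 G hc
  have hcs : ∀ x : Fin l, G x K.castSucc ≤ G x K.succ := fun x => hG x (Fin.castSucc_lt_succ (i := K)).le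
  refine ⟨max (G a K.castSucc) (G b K.castSucc), ?_⟩
  have h1 : onPt G a K (max (G a K.castSucc) (G b K.castSucc)) :=
    ⟨le_max_left _ _, max_le (hcs a) hs.2⟩
  have h2 : onPt G b K (max (G a K.castSucc) (G b K.castSucc)) :=
    ⟨le_max_right _ _, max_le hs.1 (hcs b)⟩
  exact mem_ptsF.2 ⟨a, b, hab, h1, h2⟩

noncomputable def c0 (G : Fin l → Fin (n+1) → ℤ) (hG : ∀ a, Monotone (G a)) (hc : CrossF G) :
    ℤ := (ptsF G hc).min' (ptsF_ne hG hc)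

lemma c0_pair (G : Fin l → Fin (n+1) → ℤ) (hG : ∀ a, Monotone (G a)) (hc : CrossF G) :
    ∃ a b, a ≠ b ∧ onPt G a (k0 G hc) (c0 G hG hc) ∧ onPt G b (k0 G hc) (c0 G hG hc) := by
  have h : c0 G hG hc ∈ ptsF G hc := Finset.min'_mem _ _
  exact mem_ptsF.1 h

lemma c0_min (G : Fin l → Fin (n+1) → ℤ) (hG : ∀ a, Monotone (G a)) (hc : CrossF G) {c : ℤ}
    (h : ∃ a b, a ≠ b ∧ onPt G a (k0 G hc) c ∧ onPt G b (k0 G hc) c) : c0 G hG hc ≤ c :=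
  Finset.min'_le (s := ptsF G hc) _ (mem_ptsF.2 h)

noncomputable def thruF (G : Fin l → Fin (n+1) → ℤ) (hG : ∀ a, Monotone (G a)) (hc : CrossF G) :
    Finset (Fin l) := Finset.univ.filter fun a => onPt G a (k0 G hc) (c0 G hG hc)

lemma mem_thruF {G : Fin l → Fin (n+1) → ℤ} {hG : ∀ a, Monotone (G a)} {hc : CrossF G}
    {a : Fin l} : a ∈ thruF G hG hc ↔ onPt G a (k0 G hc) (c0 G hG hc) := by
  rw [thruF, mem_filter]
  simp

lemma thruF_ne {G : Fin l → Fin (n+1) → ℤ} (hG : ∀ a, Monotone (G a)) (hc : CrossF G) :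
    (thruF G hG hc).Nonempty := by
  obtain ⟨a, b, hab, h1, h2⟩ := c0_pair G hG hc
  exact ⟨a, mem_thruF.2 h1⟩

noncomputable def i0 (G : Fin l → Fin (n+1) → ℤ) (hG : ∀ a, Monotone (G a)) (hc : CrossF G) :
    Fin l := (thruF G hG hc).min' (thruF_ne hG hc)

lemma erase_thruF_ne {G : Fin l → Fin (n+1) → ℤ} (hG : ∀ a, Monotone (G a)) (hc : CrossF G) :
    ((thruF G hG hc).erase (i0 G hG hc)).Nonempty := by
  obtain ⟨a, b, hab, h1, h2⟩ := c0_pair G hG hc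
  by_cases ha : a = i0 G hG hc
  · refine ⟨b, Finset.mem_erase.2 ⟨?_, mem_thruF.2 h2⟩⟩
    rw [← ha]; exact hab.symm
  · exact ⟨a, Finset.mem_erase.2 ⟨ha, mem_thruF.2 h1⟩⟩

noncomputable def j0 (G : Fin l → Fin (n+1) → ℤ) (hG : ∀ a, Monotone (G a)) (hc : CrossF G) :
    Fin l := ((thruF G hG hc).erase (i0 G hG hc)).min' (erase_thruF_ne hG hc)

lemma i0_thru (G : Fin l → Fin (n+1) → ℤ) (hG : ∀ a, Monotone (G a)) (hc : CrossF G) :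
    onPt G (i0 G hG hc) (k0 G hc) (c0 G hG hc) := by
  have h : i0 G hG hc ∈ thruF G hG hc := Finset.min'_mem _ _
  exact mem_thruF.1 h

lemma j0_thru (G : Fin l → Fin (n+1) → ℤ) (hG : ∀ a, Monotone (G a)) (hc : CrossF G) :
    onPt G (j0 G hG hc) (k0 G hc) (c0 G hG hc) := by
  have h : j0 G hG hc ∈ (thruF G hG hc).erase (i0 G hG hc) := Finset.min'_mem _ _
  rw [Finset.mem_erase] at h
  exact mem_thruF.1 h.2

lemma i0_ne_j0 (G : Fin l → Fin (n+1) → ℤ) (hG : ∀ a, Monotone (G a)) (hc : CrossF G) :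
    i0 G hG hc ≠ j0 G hG hc := by
  have h : j0 G hG hc ∈ (thruF G hG hc).erase (i0 G hG hc) := Finset.min'_mem _ _
  rw [Finset.mem_erase] at h
  exact (h.1).symm

noncomputable def swapG (G : Fin l → Fin (n+1) → ℤ) (hG : ∀ a, Monotone (G a)) (hc : CrossF G) :
    Fin l → Fin (n+1) → ℤ := fun a k =>
  if a = i0 G hG hc then (if (k : ℕ) ≤ (k0 G hc : ℕ) then G a k else G (j0 G hG hc) k)
  else if a = j0 G hG hc then (if (k : ℕ) ≤ (k0 G hc : ℕ) then G a k else G (i0 G hG hc) k)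
  else G a k

variable {G : Fin l → Fin (n+1) → ℤ} (hG : ∀ a, Monotone (G a)) (hc : CrossF G)

lemma sw_low (a : Fin l) (k : Fin (n+1)) (hk : (k : ℕ) ≤ (k0 G hc : ℕ)) :
    swapG G hG hc a k = G a k := by
  rw [swapG]
  split_ifs with h1 h2 h3 h4 <;> first | rfl | omega

lemma sw_high_i0 (k : Fin (n+1)) (hk : (k0 G hc : ℕ) < (k : ℕ)) :
    swapG G hG hc (i0 G hG hc) k = G (j0 G hG hc) k := by
  rw [swapG]
  split_ifs with h1 h2 <;> first | rfl | omega

lemma sw_high_j0 (k : Fin (n+1)) (hk : (k0 G hc : ℕ) < (k : ℕ)) :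
    swapG G hG hc (j0 G hG hc) k = G (i0 G hG hc) k := by
  rw [swapG]
  have hne := i0_ne_j0 G hG hc
  split_ifs with h1 h2 h3 h4 <;> first | rfl | omega | (exact absurd h1.symm hne)

lemma sw_other {a : Fin l} (h1 : a ≠ i0 G hG hc) (h2 : a ≠ j0 G hG hc) (k : Fin (n+1)) :
    swapG G hG hc a k = G a k := by
  rw [swapG, if_neg h1, if_neg h2]

lemma sw_mono : ∀ a, Monotone (swapG G hG hc a) := by
  intro a k k' hkk'
  have hkk : (k : ℕ) ≤ (k' : ℕ) := Fin.le_def.mp hkk'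
  have hI := i0_thru G hG hc
  have hJ := j0_thru G hG hc
  rcases le_or_gt (k : ℕ) ((k0 G hc : ℕ)) with hk | hk <;>
    rcases le_or_gt (k' : ℕ) ((k0 G hc : ℕ)) with hk' | hk'
  · rw [sw_low hG hc a k hk, sw_low hG hc a k' hk']; exact hG a hkk'
  · -- k low, k' high
    rw [sw_low hG hc a k hk]
    by_cases ha1 : a = i0 G hG hc
    · subst ha1
      rw [sw_high_i0 hG hc k' hk']
      calc G (i0 G hG hc) k ≤ G (i0 G hG hc) (k0 G hc).castSucc := by
            apply hG; rw [Fin.le_def]; simpa using hk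
        _ ≤ c0 G hG hc := hI.1
        _ ≤ G (j0 G hG hc) (k0 G hc).succ := hJ.2
        _ ≤ G (j0 G hG hc) k' := by
            apply hG; rw [Fin.le_def]; simp only [Fin.val_succ]; omega
    · by_cases ha2 : a = j0 G hG hc
      · subst ha2
        rw [sw_high_j0 hG hc k' hk']
        calc G (j0 G hG hc) k ≤ G (j0 G hG hc) (k0 G hc).castSucc := by
              apply hG; rw [Fin.le_def]; simpa using hk
          _ ≤ c0 G hG hc := hJ.1
          _ ≤ G (i0 G hG hc) (k0 G hc).succ := hI.2
          _ ≤ G (i0 G hG hc) k' := by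
              apply hG; rw [Fin.le_def]; simp only [Fin.val_succ]; omega
      · rw [sw_other hG hc ha1 ha2]; exact hG a hkk'
  · omega
  · -- both high
    by_cases ha1 : a = i0 G hG hc
    · subst ha1
      rw [sw_high_i0 hG hc k hk, sw_high_i0 hG hc k' hk']
      exact hG _ hkk'
    · by_cases ha2 : a = j0 G hG hc
      · subst ha2
        rw [sw_high_j0 hG hc k hk, sw_high_j0 hG hc k' hk']
        exact hG _ hkk'
      · rw [sw_other hG hc ha1 ha2, sw_other hG hc ha1 ha2]; exact hG a hkk'

lemma sw_zero (a : Fin l) : swapG G hG hc a 0 = G a 0 :=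
  sw_low hG hc a 0 (by simp)

lemma sw_cs (a : Fin l) : swapG G hG hc a (k0 G hc).castSucc = G a (k0 G hc).castSucc :=
  sw_low hG hc a _ (by simp)

lemma sw_succ_i0 : swapG G hG hc (i0 G hG hc) (k0 G hc).succ = G (j0 G hG hc) (k0 G hc).succ :=
  sw_high_i0 hG hc _ (by simp)

lemma sw_succ_j0 : swapG G hG hc (j0 G hG hc) (k0 G hc).succ = G (i0 G hG hc) (k0 G hc).succ :=
  sw_high_j0 hG hc _ (by simp)

lemma sw_last_i0 : swapG G hG hc (i0 G hG hc) (Fin.last n) = G (j0 G hG hc) (Fin.last n) :=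
  sw_high_i0 hG hc _ (by simpa using (k0 G hc).isLt)

lemma sw_last_j0 : swapG G hG hc (j0 G hG hc) (Fin.last n) = G (i0 G hG hc) (Fin.last n) :=
  sw_high_j0 hG hc _ (by simpa using (k0 G hc).isLt)

lemma sw_share_low (k : Fin n) (hk : (k : ℕ) < (k0 G hc : ℕ)) (a b : Fin l) :
    share (swapG G hG hc) a b k ↔ share G a b k := by
  rw [share, share,
    sw_low hG hc a k.castSucc (by simpa using hk.le),
    sw_low hG hc b k.castSucc (by simpa using hk.le),
    sw_low hG hc a k.succ (by simp only [Fin.val_succ]; omega),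
    sw_low hG hc b k.succ (by simp only [Fin.val_succ]; omega)]

lemma sw_share_k0 : share (swapG G hG hc) (i0 G hG hc) (j0 G hG hc) (k0 G hc) := by
  have hI := i0_thru G hG hc
  have hJ := j0_thru G hG hc
  constructor
  · rw [sw_cs, sw_succ_j0]
    exact le_trans hI.1 hI.2
  · rw [sw_cs, sw_succ_i0]
    exact le_trans hJ.1 hJ.2

lemma sw_cross : CrossF (swapG G hG hc) :=
  ⟨k0 G hc, i0 G hG hc, j0 G hG hc, i0_ne_j0 G hG hc, sw_share_k0 hG hc⟩

lemma sw_k0 : k0 (swapG G hG hc) (sw_cross hG hc) = k0 G hc := by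
  apply le_antisymm
  · exact Finset.min'_le (s := lvlF (swapG G hG hc)) _
      (mem_lvlF.2 ⟨i0 G hG hc, j0 G hG hc, i0_ne_j0 G hG hc, sw_share_k0 hG hc⟩)
  · refine Finset.le_min' _ _ _ ?_
    intro k hk
    rw [mem_lvlF] at hk
    by_contra hlt
    push_neg at hlt
    have hkv : (k : ℕ) < (k0 G hc : ℕ) := Fin.lt_def.mp hlt
    obtain ⟨a, b, hab, hs⟩ := hk
    rw [sw_share_low hG hc k hkv a b] at hs
    exact absurd (k0_min G hc k ⟨a, b, hab, hs⟩) (not_le.2 hlt)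

lemma sw_onPt_k0 {a : Fin l} {c : ℤ} (hcle : c ≤ c0 G hG hc)
    (h : onPt (swapG G hG hc) a (k0 G hc) c) : onPt G a (k0 G hc) c := by
  have hI := i0_thru G hG hc
  have hJ := j0_thru G hG hc
  by_cases ha1 : a = i0 G hG hc
  · subst ha1
    refine ⟨by rw [← sw_cs hG hc]; exact h.1, le_trans hcle hI.2⟩
  · by_cases ha2 : a = j0 G hG hc
    · subst ha2
      refine ⟨by rw [← sw_cs hG hc]; exact h.1, le_trans hcle hJ.2⟩
    · rw [onPt, sw_other hG hc ha1 ha2, sw_other hG hc ha1 ha2] at h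
      exact h

lemma sw_onPt_i0 : onPt (swapG G hG hc) (i0 G hG hc) (k0 G hc) (c0 G hG hc) := by
  rw [onPt, sw_cs, sw_succ_i0]
  exact ⟨(i0_thru G hG hc).1, (j0_thru G hG hc).2⟩

lemma sw_onPt_j0 : onPt (swapG G hG hc) (j0 G hG hc) (k0 G hc) (c0 G hG hc) := by
  rw [onPt, sw_cs, sw_succ_j0]
  exact ⟨(j0_thru G hG hc).1, (i0_thru G hG hc).2⟩

lemma sw_c0 : c0 (swapG G hG hc) (sw_mono hG hc) (sw_cross hG hc) = c0 G hG hc := by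
  apply le_antisymm
  · refine Finset.min'_le (s := ptsF (swapG G hG hc) (sw_cross hG hc)) _ (mem_ptsF.2 ?_)
    rw [sw_k0]
    exact ⟨i0 G hG hc, j0 G hG hc, i0_ne_j0 G hG hc, sw_onPt_i0 hG hc, sw_onPt_j0 hG hc⟩
  · refine Finset.le_min' _ _ _ ?_
    intro c hcm
    rw [mem_ptsF, sw_k0] at hcm
    by_contra hlt
    push_neg at hlt
    obtain ⟨a, b, hab, h1, h2⟩ := hcm
    exact absurd (c0_min G hG hc ⟨a, b, hab, sw_onPt_k0 hG hc hlt.le h1,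
      sw_onPt_k0 hG hc hlt.le h2⟩) (not_le.2 hlt)

lemma sw_thru :
    thruF (swapG G hG hc) (sw_mono hG hc) (sw_cross hG hc) = thruF G hG hc := by
  have hI := i0_thru G hG hc
  have hJ := j0_thru G hG hc
  ext a
  rw [mem_thruF, mem_thruF, sw_k0, sw_c0]
  constructor
  · intro h
    exact sw_onPt_k0 hG hc le_rfl h
  · intro h
    by_cases ha1 : a = i0 G hG hc
    · subst ha1; exact sw_onPt_i0 hG hc
    · by_cases ha2 : a = j0 G hG hc
      · subst ha2; exact sw_onPt_j0 hG hc
      · rw [onPt, sw_other hG hc ha1 ha2, sw_other hG hc ha1 ha2]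
        exact h

lemma sw_i0 : i0 (swapG G hG hc) (sw_mono hG hc) (sw_cross hG hc) = i0 G hG hc :=
  min'_congr (sw_thru hG hc) _ _

lemma sw_j0 : j0 (swapG G hG hc) (sw_mono hG hc) (sw_cross hG hc) = j0 G hG hc := by
  rw [j0, j0]
  apply min'_congr
  rw [sw_thru hG hc, sw_i0 hG hc]

lemma sw_sw : swapG (swapG G hG hc) (sw_mono hG hc) (sw_cross hG hc) = G := by
  funext a k
  have e1 := sw_i0 hG hc
  have e2 := sw_j0 hG hc
  have e3 := sw_k0 hG hc
  rw [swapG]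
  simp only [e1, e2, e3]
  split_ifs with h1 h2 h3 h4
  · subst h1; exact sw_low hG hc _ k h2
  · subst h1
    rw [sw_high_j0 hG hc k (by omega)]
  · subst h3; exact sw_low hG hc _ k h4
  · subst h3
    rw [sw_high_i0 hG hc k (by omega)]
  · exact sw_other hG hc h1 h3 k

lemma sw_wt (X : Fin n → ℤ → R) :
    (∏ a, wtp X (swapG G hG hc a)) = ∏ a, wtp X (G a) := by
  apply prod_pair_swap _ _ (i0_ne_j0 G hG hc)
  · -- the swapped pair has the same total weight
    rw [wtp, wtp, wtp, wtp, ← Finset.prod_mul_distrib, ← Finset.prod_mul_distrib]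
    apply Finset.prod_congr rfl
    intro k _
    rcases lt_trichotomy (k : ℕ) ((k0 G hc : ℕ)) with hk | hk | hk
    · rw [sw_low hG hc _ k.castSucc (by simpa using hk.le),
        sw_low hG hc _ k.succ (by simp only [Fin.val_succ]; omega),
        sw_low hG hc _ k.castSucc (by simpa using hk.le),
        sw_low hG hc _ k.succ (by simp only [Fin.val_succ]; omega)]
    · have : k = k0 G hc := Fin.ext hk
      subst this
      rw [sw_cs, sw_cs, sw_succ_i0, sw_succ_j0]
      have hI := i0_thru G hG hc
      have hJ := j0_thru G hG hc
      exact four (X (k0 G hc)) hI.1 hI.2 hJ.1 hJ.2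
    · rw [sw_high_i0 hG hc k.castSucc (by simpa using hk),
        sw_high_i0 hG hc k.succ (by simp only [Fin.val_succ]; omega),
        sw_high_j0 hG hc k.castSucc (by simpa using hk),
        sw_high_j0 hG hc k.succ (by simp only [Fin.val_succ]; omega)]
      ring
  · intro a ha1 ha2
    have := sw_other hG hc ha1 ha2
    rw [show swapG G hG hc a = G a from funext this]

end Families

section Ordering

variable {n l : ℕ}

lemma ord {G : Fin l → Fin (n+1) → ℤ} (hG : ∀ i, Monotone (G i)) (hnc : ¬ CrossF G)
    (hstart : ∀ i j : Fin l, i < j → G j 0 < G i 0) :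
    ∀ (m : ℕ) (hm : m < n) (i j : Fin l), i < j →
      G j (Fin.succ ⟨m, hm⟩) < G i (Fin.castSucc ⟨m, hm⟩) := by
  have hsh : ∀ (k : Fin n) (a b : Fin l), a ≠ b → ¬ share G a b k := by
    intro k a b hab hs
    exact hnc ⟨k, a, b, hab, hs⟩
  intro m
  induction m with
  | zero =>
    intro hm i j hij
    have h := hsh ⟨0, hm⟩ i j (ne_of_lt hij)
    rw [share, not_and_or] at h
    rcases h with h | h
    · push_neg at h; exact h
    · push_neg at h
      exfalso
      have h0 : (Fin.castSucc (⟨0, hm⟩ : Fin n)) = 0 := by apply Fin.ext; simp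
      rw [h0] at h
      have h1 : G i 0 ≤ G i (Fin.succ ⟨0, hm⟩) := hG i (Fin.zero_le _)
      have h2 := hstart i j hij
      omega
  | succ p ih =>
    intro hm i j hij
    have hp : p < n := by omega
    have IH := ih hp i j hij
    have h := hsh ⟨p+1, hm⟩ i j (ne_of_lt hij)
    rw [share, not_and_or] at h
    rcases h with h | h
    · push_neg at h; exact h
    · push_neg at h
      exfalso
      have hix : (Fin.castSucc (⟨p+1, hm⟩ : Fin n)) = Fin.succ (⟨p, hp⟩ : Fin n) := by
        apply Fin.val_injective
        simp
      have e1 : G j (Fin.castSucc (⟨p+1, hm⟩ : Fin n)) = G j (Fin.succ (⟨p, hp⟩ : Fin n)) :=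
        congrArg (G j) hix
      have e2 : G i (Fin.castSucc (⟨p, hp⟩ : Fin n)) ≤ G i (Fin.succ (⟨p+1, hm⟩ : Fin n)) := by
        apply hG; rw [Fin.le_def]; simp only [Fin.coe_castSucc, Fin.val_succ]; omega
      rw [e1] at h
      omega

lemma perm_eq_one {l : ℕ} (σ : Equiv.Perm (Fin l)) (h : ∀ i j : Fin l, i < j → σ i < σ j) :
    σ = 1 := by
  have key : ∀ (τ : Equiv.Perm (Fin l)), (∀ i j : Fin l, i < j → τ i < τ j) →
      ∀ (m : ℕ) (hm : m < l), m ≤ ((τ ⟨m, hm⟩ : Fin l) : ℕ) := by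
    intro τ hτ m
    induction m with
    | zero => intro hm; exact Nat.zero_le _
    | succ p ih =>
      intro hm
      have hp : p < l := by omega
      have h1 := ih hp
      have h2 : τ ⟨p, hp⟩ < τ ⟨p+1, hm⟩ := hτ _ _ (by rw [Fin.lt_def]; simp)
      have h3 := Fin.lt_def.mp h2
      omega
  have hinv : ∀ i j : Fin l, i < j → σ⁻¹ i < σ⁻¹ j := by
    intro i j hij
    rcases lt_trichotomy (σ⁻¹ i) (σ⁻¹ j) with hh | hh | hh
    · exact hh
    · exfalso
      have heq : i = j := by
        have := congrArg σ hh
        simpa using this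
      exact absurd heq (ne_of_lt hij)
    · exfalso
      have h2 := h _ _ hh
      simp only [show ∀ x, σ (σ⁻¹ x) = x from fun x => (Equiv.eq_symm_apply σ).mp rfl] at h2
      exact absurd hij (not_lt.2 h2.le)
  apply Equiv.ext
  intro i
  have h1 : (i : ℕ) ≤ ((σ i : Fin l) : ℕ) := by
    have := key σ h i.1 i.2
    simpa using this
  have h2 : ((σ i : Fin l) : ℕ) ≤ ((σ⁻¹ (σ i) : Fin l) : ℕ) := by
    have := key σ⁻¹ hinv (σ i).1 (σ i).2
    simpa using this
  rw [show σ⁻¹ (σ i) = i from Equiv.Perm.inv_eq_iff_eq.mpr rfl] at h2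
  simp only [Equiv.Perm.one_apply]
  apply Fin.ext
  omega

lemma noncross_id (Ast Bnd : Fin l → ℤ)
    (hA : ∀ i j : Fin l, i < j → Ast j < Ast i) (hB : ∀ i j : Fin l, i < j → Bnd j < Bnd i)
    {n : ℕ} (σ : Equiv.Perm (Fin l)) (G : Fin l → Fin (n+1) → ℤ)
    (hGm : ∀ i, Monotone (G i)) (h0 : ∀ i, G i 0 = Ast i)
    (hl : ∀ i, G i (Fin.last n) = Bnd (σ i)) (hnc : ¬ CrossF G) : σ = 1 := by
  apply perm_eq_one
  intro i j hij
  have hBij : Bnd (σ j) < Bnd (σ i) := by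
    rcases Nat.eq_zero_or_pos n with hn | hn
    · subst hn
      have e : ∀ x : Fin l, Ast x = Bnd (σ x) := by
        intro x
        rw [← h0 x, ← hl x]
        refine congrArg (G x) ?_
        apply Fin.val_injective
        simp [Fin.last]
      rw [← e i, ← e j]
      exact hA i j hij
    · have hn1 : n - 1 < n := by omega
      have hord := ord hGm hnc (fun a b hab => by rw [h0 a, h0 b]; exact hA a b hab)
        (n-1) hn1 i j hij
      have e1 : Fin.succ (⟨n-1, hn1⟩ : Fin n) = Fin.last n := by
        apply Fin.val_injective
        simp only [Fin.val_succ, Fin.val_last]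
        omega
      have e2 : G i (Fin.castSucc (⟨n-1, hn1⟩ : Fin n)) ≤ G i (Fin.last n) :=
        hGm i (Fin.le_last _)
      rw [e1, hl j] at hord
      rw [hl i] at e2
      omega
  rcases lt_trichotomy (σ i) (σ j) with h | h | h
  · exact h
  · exfalso; rw [h] at hBij; exact lt_irrefl _ hBij
  · exfalso; exact absurd hBij (not_lt.2 (hB _ _ h).le)

end Ordering

section Cancel

variable {n l : ℕ} {R : Type*} [CommRing R]

lemma sw_i0' {G : Fin l → Fin (n+1) → ℤ} (hG : ∀ a, Monotone (G a)) (hc : CrossF G)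
    (h1 : ∀ a, Monotone (swapG G hG hc a)) (h2 : CrossF (swapG G hG hc)) :
    i0 (swapG G hG hc) h1 h2 = i0 G hG hc := sw_i0 hG hc

lemma sw_j0' {G : Fin l → Fin (n+1) → ℤ} (hG : ∀ a, Monotone (G a)) (hc : CrossF G)
    (h1 : ∀ a, Monotone (swapG G hG hc a)) (h2 : CrossF (swapG G hG hc)) :
    j0 (swapG G hG hc) h1 h2 = j0 G hG hc := sw_j0 hG hc

lemma sw_sw' {G : Fin l → Fin (n+1) → ℤ} (hG : ∀ a, Monotone (G a)) (hc : CrossF G)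
    (h1 : ∀ a, Monotone (swapG G hG hc a)) (h2 : CrossF (swapG G hG hc)) :
    swapG (swapG G hG hc) h1 h2 = G := sw_sw hG hc

set_option maxHeartbeats 1600000 in
lemma cross_cancel (X : Fin n → ℤ → R) (Ast Bnd : Fin l → ℤ) :
    ∑ x ∈ ((Finset.univ : Finset (Equiv.Perm (Fin l))).sigma fun σ =>
        Fintype.piFinset fun i => pathsF n (Ast i) (Bnd (σ i))).filter
        (fun x => CrossF x.2),
      (((Equiv.Perm.sign x.1 : ℤ) : R) * ∏ i, wtp X (x.2 i)) = 0 := by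
  set S := ((Finset.univ : Finset (Equiv.Perm (Fin l))).sigma fun σ =>
      Fintype.piFinset fun i => pathsF n (Ast i) (Bnd (σ i))).filter
      (fun x => CrossF x.2) with hS
  have hSmem : ∀ y : (Σ _ : Equiv.Perm (Fin l), (Fin l → Fin (n+1) → ℤ)),
      y ∈ S ↔ (∀ i, y.2 i ∈ pathsF n (Ast i) (Bnd (y.1 i))) ∧ CrossF y.2 := by
    intro y
    rw [hS, mem_filter, Finset.mem_sigma]
    constructor
    · rintro ⟨⟨-, hpi⟩, hcr⟩
      exact ⟨Fintype.mem_piFinset.1 hpi, hcr⟩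
    · rintro ⟨hpi, hcr⟩
      exact ⟨⟨mem_univ _, Fintype.mem_piFinset.2 hpi⟩, hcr⟩
  have hmem : ∀ x ∈ S, (∀ a, Monotone (x.2 a)) ∧ CrossF x.2 := by
    intro x hx
    obtain ⟨hpi, hcr⟩ := (hSmem x).1 hx
    exact ⟨fun a => (mem_pathsF.1 (hpi a)).1, hcr⟩
  have hends : ∀ x ∈ S, ∀ i, x.2 i 0 = Ast i ∧ x.2 i (Fin.last n) = Bnd (x.1 i) := by
    intro x hx i
    obtain ⟨hpi, -⟩ := (hSmem x).1 hx
    exact (mem_pathsF.1 (hpi i)).2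
  refine Finset.sum_involution
    (fun x hx =>
      ⟨x.1 * Equiv.swap (i0 x.2 (hmem x hx).1 (hmem x hx).2) (j0 x.2 (hmem x hx).1 (hmem x hx).2),
        swapG x.2 (hmem x hx).1 (hmem x hx).2⟩) ?hzero ?hne ?hmem2 ?hinv
  case hzero =>
    intro x hx
    obtain ⟨hGm, hcr⟩ := hmem x hx
    have hsign : ((Equiv.Perm.sign (x.1 * Equiv.swap (i0 x.2 (hmem x hx).1 (hmem x hx).2)
        (j0 x.2 (hmem x hx).1 (hmem x hx).2)) : ℤ) : R) = -((Equiv.Perm.sign x.1 : ℤ) : R) := by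
      rw [Equiv.Perm.sign_mul, Equiv.Perm.sign_swap (i0_ne_j0 _ _ _)]
      push_cast
      ring
    dsimp only
    rw [hsign, sw_wt (hmem x hx).1 (hmem x hx).2 X]
    ring
  case hne =>
    intro x hx _
    intro heq
    have hfst := congrArg Sigma.fst heq
    dsimp only at hfst
    have hswap : Equiv.swap (i0 x.2 (hmem x hx).1 (hmem x hx).2)
        (j0 x.2 (hmem x hx).1 (hmem x hx).2) = 1 := by
      have : x.1 * Equiv.swap (i0 x.2 (hmem x hx).1 (hmem x hx).2)
          (j0 x.2 (hmem x hx).1 (hmem x hx).2) = x.1 * 1 := by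
        rw [mul_one]; exact hfst
      exact mul_left_cancel this
    have := congrArg (fun e : Equiv.Perm (Fin l) => e (i0 x.2 (hmem x hx).1 (hmem x hx).2)) hswap
    simp only [Equiv.swap_apply_left, Equiv.Perm.one_apply] at this
    exact i0_ne_j0 _ _ _ this.symm
  case hmem2 =>
    intro x hx
    obtain ⟨hGm, hcr⟩ := hmem x hx
    rw [hSmem]
    refine ⟨fun i => ?_, sw_cross _ _⟩
    dsimp only
    rw [mem_pathsF]
    refine ⟨sw_mono _ _ i, ?_, ?_⟩
    · rw [sw_zero]
      exact (hends x hx i).1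
    · by_cases hi1 : i = i0 x.2 (hmem x hx).1 (hmem x hx).2
      · subst hi1
        rw [sw_last_i0]
        have := (hends x hx (j0 x.2 (hmem x hx).1 (hmem x hx).2)).2
        rw [this]
        congr 1
        simp only [Equiv.Perm.mul_apply, Equiv.swap_apply_left]
      · by_cases hi2 : i = j0 x.2 (hmem x hx).1 (hmem x hx).2
        · subst hi2
          rw [sw_last_j0]
          have := (hends x hx (i0 x.2 (hmem x hx).1 (hmem x hx).2)).2
          rw [this]
          congr 1
          simp only [Equiv.Perm.mul_apply, Equiv.swap_apply_right]
        · rw [sw_other _ _ hi1 hi2]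
          have := (hends x hx i).2
          rw [this]
          congr 1
          simp only [Equiv.Perm.mul_apply]
          rw [Equiv.swap_apply_of_ne_of_ne hi1 hi2]
  case hinv =>
    intro x hx
    dsimp only
    rw [sw_i0' (hmem x hx).1 (hmem x hx).2, sw_j0' (hmem x hx).1 (hmem x hx).2,
      sw_sw' (hmem x hx).1 (hmem x hx).2, mul_assoc, Equiv.swap_mul_self, mul_one]

end Cancel

section SkewBij

variable {R : Type*} [CommRing R]

lemma mem_skewCells {lam mu : ℕ → ℕ} {l : ℕ} (hlam : Antitone lam) {p : ℕ × ℕ} :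
    p ∈ skewCells lam mu l ↔ p.1 < l ∧ mu p.1 ≤ p.2 ∧ p.2 < lam p.1 := by
  rw [skewCells, mem_filter, Finset.mem_product, mem_range, mem_range]
  constructor
  · rintro ⟨⟨h1, -⟩, h3, h4⟩
    exact ⟨h1, h3, h4⟩
  · rintro ⟨h1, h3, h4⟩
    exact ⟨⟨h1, lt_of_lt_of_le h4 (hlam (Nat.zero_le _))⟩, h3, h4⟩

/-- The letter function of row `i` of a skew filling. -/
noncomputable def skewF {n l : ℕ} {lam mu : ℕ → ℕ}
    (T : {p // p ∈ skewCells lam mu l} → Fin n) (i : ℕ) : ℤ → ℕ := fun c =>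
  if h : (i, (c + i).toNat) ∈ skewCells lam mu l then (T ⟨_, h⟩ : ℕ) else 0

lemma skewF_mem {n l : ℕ} {lam mu : ℕ → ℕ} (hlam : Antitone lam)
    (T : {p // p ∈ skewCells lam mu l} → Fin n) {i : ℕ} (hi : i < l) {c : ℤ}
    (hc : c ∈ Finset.Ico ((mu i : ℤ) - i) ((lam i : ℤ) - i)) :
    ∃ h : (i, (c + i).toNat) ∈ skewCells lam mu l,
      skewF T i c = (T ⟨_, h⟩ : ℕ) ∧ ((c + i).toNat : ℤ) = c + i := by
  rw [mem_Ico] at hc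
  have h : (i, (c + i).toNat) ∈ skewCells lam mu l := by
    rw [mem_skewCells hlam]
    refine ⟨hi, ?_, ?_⟩ <;> simp only <;> omega
  exact ⟨h, by rw [skewF, dif_pos h], by omega⟩

lemma skewF_facts {n l : ℕ} {lam mu : ℕ → ℕ} (hlam : Antitone lam)
    {T : {p // p ∈ skewCells lam mu l} → Fin n}
    (hrow : ∀ p q : {p // p ∈ skewCells lam mu l}, (q : ℕ × ℕ).1 = (p : ℕ × ℕ).1 ∧
      (q : ℕ × ℕ).2 = (p : ℕ × ℕ).2 + 1 → T p ≤ T q) {i : ℕ} (hi : i < l) :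
    (∀ c c', c ∈ Finset.Ico ((mu i : ℤ) - i) ((lam i : ℤ) - i) →
      c' ∈ Finset.Ico ((mu i : ℤ) - i) ((lam i : ℤ) - i) → c ≤ c' → skewF T i c ≤ skewF T i c') ∧
    (∀ c ∈ Finset.Ico ((mu i : ℤ) - i) ((lam i : ℤ) - i), skewF T i c < n) := by
  constructor
  · apply stepMono
    intro c hc hc1
    obtain ⟨h1, e1, v1⟩ := skewF_mem hlam T hi (c := c) (mem_Ico.2 ⟨hc, by omega⟩)
    obtain ⟨h2, e2, v2⟩ := skewF_mem hlam T hi (c := c + 1) (mem_Ico.2 ⟨by omega, hc1⟩)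
    rw [e1, e2]
    have : T ⟨_, h1⟩ ≤ T ⟨_, h2⟩ := by
      apply hrow
      constructor
      · rfl
      · simp only
        omega
    exact this
  · intro c hc
    obtain ⟨h1, e1, -⟩ := skewF_mem hlam T hi hc
    rw [e1]
    exact (T ⟨_, h1⟩).isLt

/-- Column-strictness forces consecutive paths to be strictly separated. -/
lemma consec {n l : ℕ} {lam mu : ℕ → ℕ} (hlam : Antitone lam) (hmu : Antitone mu)
    (hsub : ∀ i, mu i ≤ lam i)
    {T : {p // p ∈ skewCells lam mu l} → Fin n}
    (hrow : ∀ p q : {p // p ∈ skewCells lam mu l}, (q : ℕ × ℕ).1 = (p : ℕ × ℕ).1 ∧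
      (q : ℕ × ℕ).2 = (p : ℕ × ℕ).2 + 1 → T p ≤ T q)
    (hcol : ∀ p q : {p // p ∈ skewCells lam mu l}, (q : ℕ × ℕ).1 = (p : ℕ × ℕ).1 + 1 ∧
      (q : ℕ × ℕ).2 = (p : ℕ × ℕ).2 → T p < T q)
    {i : ℕ} (hi1 : i + 1 < l) (k : Fin n) :
    pathOf n (skewF T (i+1)) ((mu (i+1) : ℤ) - (i+1)) ((lam (i+1) : ℤ) - (i+1)) k.succ <
      pathOf n (skewF T i) ((mu i : ℤ) - i) ((lam i : ℤ) - i) k.castSucc := by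
  have hi : i < l := by omega
  obtain ⟨hmono, hlt⟩ := skewF_facts hlam hrow (T := T) (mu := mu) (i := i) hi
  obtain ⟨hmono', hlt'⟩ := skewF_facts hlam hrow (T := T) (mu := mu) (i := i+1) hi1
  push_cast at hmono' hlt' ⊢
  set a := (mu i : ℤ) - i with ha
  set b := (lam i : ℤ) - i with hb
  set a' := (mu (i+1) : ℤ) - ((i : ℤ) + 1) with ha'
  set b' := (lam (i+1) : ℤ) - ((i : ℤ) + 1) with hb'
  have hab : a ≤ b := by rw [ha, hb]; have := hsub i; omega
  have hab' : a' ≤ b' := by rw [ha', hb']; have := hsub (i+1); omega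
  have hbb : b' < b := by rw [hb, hb']; have := hlam (show i ≤ i+1 by omega); omega
  have haa : a' < a := by rw [ha, ha']; have := hmu (show i ≤ i+1 by omega); omega
  set D := pathOf n (skewF T i) a b k.castSucc with hD
  set D' := pathOf n (skewF T (i+1)) a' b' k.succ with hD'
  have hDa : a ≤ D := pathOf_ge n _ a b _
  have hDb : D ≤ b := pathOf_le n _ hab _
  have hD'a : a' ≤ D' := pathOf_ge n _ a' b' _
  have hD'b : D' ≤ b' := pathOf_le n _ hab' _
  by_contra hge
  push_neg at hge   -- D ≤ D'
  rcases eq_or_lt_of_le hDb with hdeq | hdlt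
  · omega
  · have hdmem : D ∈ Finset.Ico a b := mem_Ico.2 ⟨hDa, hdlt⟩
    have hfd : (k : ℕ) ≤ skewF T i D := by
      by_contra hcon
      push_neg at hcon
      have hDD : D < D := by
        rw [hD]
        rw [pathOf_lt_iff n hmono k.castSucc hdmem]
        simpa using hcon
      omega
    have hd1mem : D - 1 ∈ Finset.Ico a' b' := mem_Ico.2 ⟨by omega, by omega⟩
    have hfd' : skewF T (i+1) (D-1) < (k : ℕ) + 1 := by
      have hlt1 : D - 1 < D' := by omega
      rw [hD', pathOf_lt_iff n hmono' k.succ hd1mem] at hlt1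
      simpa using hlt1
    obtain ⟨hp, ep, vp⟩ := skewF_mem hlam T hi hdmem
    obtain ⟨hq, eq', vq⟩ := skewF_mem hlam T (i := i + 1) hi1
      (mem_Ico.2 ⟨by push_cast; omega, by push_cast; omega⟩) (c := D - 1)
    have hcolthis := hcol ⟨_, hp⟩ ⟨_, hq⟩ ?_
    · have h1 : (k : ℕ) ≤ (T ⟨_, hp⟩ : ℕ) := by rw [← ep]; exact hfd
      have h2 : ((T ⟨_, hq⟩ : ℕ)) ≤ (k : ℕ) := by rw [← eq']; omega
      have := Fin.lt_def.mp hcolthis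
      omega
    · constructor
      · rfl
      · show (D - 1 + ((i : ℤ) + 1)).toNat = (D + (i : ℤ)).toNat
        omega

end SkewBij

section SkewMain

variable {R : Type*} [CommRing R]

lemma ordT {n l : ℕ} {lam mu : ℕ → ℕ} (hlam : Antitone lam) (hmu : Antitone mu)
    (hsub : ∀ i, mu i ≤ lam i)
    {T : {p // p ∈ skewCells lam mu l} → Fin n}
    (hrow : ∀ p q : {p // p ∈ skewCells lam mu l}, (q : ℕ × ℕ).1 = (p : ℕ × ℕ).1 ∧
      (q : ℕ × ℕ).2 = (p : ℕ × ℕ).2 + 1 → T p ≤ T q)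
    (hcol : ∀ p q : {p // p ∈ skewCells lam mu l}, (q : ℕ × ℕ).1 = (p : ℕ × ℕ).1 + 1 ∧
      (q : ℕ × ℕ).2 = (p : ℕ × ℕ).2 → T p < T q) :
    ∀ (d : ℕ) (i j : Fin l), (j : ℕ) = (i : ℕ) + d + 1 → ∀ k : Fin n,
      pathOf n (skewF T (j : ℕ)) ((mu (j : ℕ) : ℤ) - (j : ℕ)) ((lam (j : ℕ) : ℤ) - (j : ℕ))
          k.succ <
        pathOf n (skewF T (i : ℕ)) ((mu (i : ℕ) : ℤ) - (i : ℕ)) ((lam (i : ℕ) : ℤ) - (i : ℕ))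
          k.castSucc := by
  intro d
  induction d with
  | zero =>
    intro i j hj k
    have hi1 : (i : ℕ) + 1 < l := by have := j.isLt; omega
    have hcc := consec hlam hmu hsub hrow hcol (i := (i : ℕ)) hi1 k
    rw [show ((j : ℕ)) = (i : ℕ) + 1 from hj]
    exact hcc
  | succ p ih =>
    intro i j hj k
    have him : (i : ℕ) + 1 < l := by have := j.isLt; omega
    have h1 := ih ⟨(i : ℕ) + 1, him⟩ j (by simpa using by omega) k
    have h2 := consec hlam hmu hsub hrow hcol (i := (i : ℕ)) him k
    have h3 : pathOf n (skewF T ((i : ℕ) + 1)) ((mu ((i : ℕ) + 1) : ℤ) - ((i : ℕ) + 1))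
          ((lam ((i : ℕ) + 1) : ℤ) - ((i : ℕ) + 1)) k.castSucc ≤
        pathOf n (skewF T ((i : ℕ) + 1)) ((mu ((i : ℕ) + 1) : ℤ) - ((i : ℕ) + 1))
          ((lam ((i : ℕ) + 1) : ℤ) - ((i : ℕ) + 1)) k.succ :=
      pathOf_monotone n _ _ _ (Fin.castSucc_lt_succ (i := k)).le
    exact lt_of_lt_of_le h1 (le_trans h3 h2.le)

set_option maxHeartbeats 2000000 in
theorem skew_eq (n l : ℕ) (lam mu : ℕ → ℕ) (hlam : Antitone lam) (hmu : Antitone mu)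
    (hsub : ∀ i, mu i ≤ lam i) (X : Fin n → ℤ → R) :
    schurGen n (skewCells lam mu l) X =
      ∑ G ∈ (Fintype.piFinset fun i : Fin l =>
          pathsF n ((mu (i : ℕ) : ℤ) - (i : ℕ)) ((lam (i : ℕ) : ℤ) - (i : ℕ))).filter
          (fun G => ¬ CrossF G),
        ∏ i, wtp X (G i) := by
  rw [schurGen]
  have hP : ∀ p : {p // p ∈ skewCells lam mu l}, (p : ℕ × ℕ).1 < l ∧
      mu (p : ℕ × ℕ).1 ≤ (p : ℕ × ℕ).2 ∧ (p : ℕ × ℕ).2 < lam (p : ℕ × ℕ).1 :=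
    fun p => (mem_skewCells hlam).1 p.2
  apply Finset.sum_bij (i := fun T _ => fun i : Fin l =>
    pathOf n (skewF T (i : ℕ)) ((mu (i : ℕ) : ℤ) - (i : ℕ)) ((lam (i : ℕ) : ℤ) - (i : ℕ)))
  · -- membership
    intro T hT
    rw [mem_filter] at hT
    obtain ⟨-, hrow, hcol⟩ := hT
    rw [mem_filter]
    constructor
    · rw [Fintype.mem_piFinset]
      intro i
      obtain ⟨hmono, hlt⟩ := skewF_facts hlam hrow (i := (i : ℕ)) i.isLt
      exact pathOf_mem n _ (by have := hsub (i : ℕ); omega) hlt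
    · intro hcr
      obtain ⟨k, a, b, hab, hs⟩ := hcr
      have horder : ∀ (x y : Fin l), x < y → ∀ k : Fin n,
          pathOf n (skewF T (y : ℕ)) ((mu (y : ℕ) : ℤ) - (y : ℕ)) ((lam (y : ℕ) : ℤ) - (y : ℕ))
              k.succ <
            pathOf n (skewF T (x : ℕ)) ((mu (x : ℕ) : ℤ) - (x : ℕ))
              ((lam (x : ℕ) : ℤ) - (x : ℕ)) k.castSucc := by
        intro x y hxy k'
        exact ordT hlam hmu hsub hrow hcol ((y : ℕ) - (x : ℕ) - 1) x y
          (by have := Fin.lt_def.mp hxy; omega) k'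
      rcases lt_or_gt_of_ne hab with h | h
      · exact absurd hs.1 (not_le.2 (horder a b h k))
      · exact absurd hs.2 (not_le.2 (horder b a h k))
  · -- injectivity
    intro T1 h1 T2 h2 heq
    rw [mem_filter] at h1 h2
    obtain ⟨-, hrow1, -⟩ := h1
    obtain ⟨-, hrow2, -⟩ := h2
    funext p
    obtain ⟨⟨pi, pj⟩, hp⟩ := p
    obtain ⟨hpi, hpj1, hpj2⟩ := (mem_skewCells hlam).1 hp
    simp only at hpi hpj1 hpj2
    have hcmem : ((pj : ℤ) - pi) ∈ Finset.Ico ((mu pi : ℤ) - pi) ((lam pi : ℤ) - pi) := by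
      rw [mem_Ico]; omega
    obtain ⟨hm1, hl1⟩ := skewF_facts hlam hrow1 (T := T1) (i := pi) hpi
    obtain ⟨hm2, hl2⟩ := skewF_facts hlam hrow2 (T := T2) (i := pi) hpi
    have k1 := letterOf_pathOf n hm1 hl1 hcmem
    have k2 := letterOf_pathOf n hm2 hl2 hcmem
    have heqi := congrFun heq (⟨pi, hpi⟩ : Fin l)
    simp only at heqi
    rw [heqi] at k1
    have hvals : skewF T1 pi ((pj : ℤ) - pi) = skewF T2 pi ((pj : ℤ) - pi) := by
      rw [← k1, ← k2]
    have e1 : skewF T1 pi ((pj : ℤ) - pi) = (T1 ⟨(pi, pj), hp⟩ : ℕ) := by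
      rw [skewF, show (((pj : ℤ) - pi + pi).toNat) = pj by omega, dif_pos hp]
    have e2 : skewF T2 pi ((pj : ℤ) - pi) = (T2 ⟨(pi, pj), hp⟩ : ℕ) := by
      rw [skewF, show (((pj : ℤ) - pi + pi).toNat) = pj by omega, dif_pos hp]
    apply Fin.val_injective
    rw [← e1, ← e2, hvals]
  · -- surjectivity
    intro G hG
    rw [mem_filter, Fintype.mem_piFinset] at hG
    obtain ⟨hpi, hnc⟩ := hG
    have hGm : ∀ i, Monotone (G i) := fun i => (mem_pathsF.1 (hpi i)).1
    have hG0 : ∀ i : Fin l, G i 0 = (mu (i : ℕ) : ℤ) - (i : ℕ) :=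
      fun i => (mem_pathsF.1 (hpi i)).2.1
    have hGl : ∀ i : Fin l, G i (Fin.last n) = (lam (i : ℕ) : ℤ) - (i : ℕ) :=
      fun i => (mem_pathsF.1 (hpi i)).2.2
    have hstart : ∀ i j : Fin l, i < j → G j 0 < G i 0 := by
      intro i j hij
      rw [hG0, hG0]
      have h1 := hmu (le_of_lt (Fin.lt_def.mp hij))
      have h2 := Fin.lt_def.mp hij
      omega
    have hord := ord hGm hnc hstart
    have hbound : ∀ p : {p // p ∈ skewCells lam mu l},
        G ⟨(p : ℕ × ℕ).1, (hP p).1⟩ 0 ≤ content (p : ℕ × ℕ) ∧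
        content (p : ℕ × ℕ) < G ⟨(p : ℕ × ℕ).1, (hP p).1⟩ (Fin.last n) := by
      intro p
      obtain ⟨h1, h2, h3⟩ := hP p
      rw [hG0, hGl]
      simp only [content]
      omega
    have hQ : ∀ p : {p // p ∈ skewCells lam mu l},
        letterOf (G ⟨(p : ℕ × ℕ).1, (hP p).1⟩) (content (p : ℕ × ℕ)) < n :=
      fun p => letterOf_lt (hGm _) (hbound p).1 (hbound p).2
    refine ⟨fun p => ⟨letterOf (G ⟨(p : ℕ × ℕ).1, (hP p).1⟩) (content (p : ℕ × ℕ)), hQ p⟩,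
      ?_, ?_⟩
    · rw [mem_filter]
      refine ⟨mem_univ _, ?_, ?_⟩
      · -- rows weakly increase
        intro p q ⟨hq1, hq2⟩
        rw [Fin.mk_le_mk]
        have hrq : (⟨(q : ℕ × ℕ).1, (hP q).1⟩ : Fin l) = ⟨(p : ℕ × ℕ).1, (hP p).1⟩ := by
          apply Fin.val_injective
          exact hq1
        rw [hrq]
        apply letterOf_mono
        simp only [content]
        rw [hq1, hq2]
        push_cast
        omega
      · -- columns strictly increase
        intro p q ⟨hq1, hq2⟩
        rw [Fin.mk_lt_mk]
        by_contra hle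
        push_neg at hle
        obtain ⟨hkp, hlep, hltp⟩ := letterOf_spec (hGm _) (hbound p).1 (hbound p).2
        obtain ⟨hkq, hleq, hltq⟩ := letterOf_spec (hGm _) (hbound q).1 (hbound q).2
        have hijlt : (⟨(p : ℕ × ℕ).1, (hP p).1⟩ : Fin l) < ⟨(q : ℕ × ℕ).1, (hP q).1⟩ := by
          rw [Fin.mk_lt_mk, hq1]
          omega
        have hOO := hord _ hkp _ _ hijlt
        have hmono2 : G ⟨(q : ℕ × ℕ).1, (hP q).1⟩
            (Fin.succ ⟨letterOf (G ⟨(q : ℕ × ℕ).1, (hP q).1⟩) (content (q : ℕ × ℕ)), hkq⟩) ≤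
            G ⟨(q : ℕ × ℕ).1, (hP q).1⟩
            (Fin.succ ⟨letterOf (G ⟨(p : ℕ × ℕ).1, (hP p).1⟩) (content (p : ℕ × ℕ)), hkp⟩) :=
          hGm _ (fin_succ_le_succ hle)
        have hcontent : content (q : ℕ × ℕ) = content (p : ℕ × ℕ) - 1 := by
          simp only [content]
          rw [hq1, hq2]
          push_cast
          ring
        omega
    · -- the image is G
      funext i
      have hcongr : ∀ c ∈ Finset.Ico ((mu (i : ℕ) : ℤ) - (i : ℕ)) ((lam (i : ℕ) : ℤ) - (i : ℕ)),
          skewF (fun p => (⟨letterOf (G ⟨(p : ℕ × ℕ).1, (hP p).1⟩) (content (p : ℕ × ℕ)),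
            hQ p⟩ : Fin n)) (i : ℕ) c = letterOf (G i) c := by
        intro c hc
        rw [mem_Ico] at hc
        have hcell : ((i : ℕ), (c + (i : ℕ)).toNat) ∈ skewCells lam mu l := by
          rw [mem_skewCells hlam]
          refine ⟨i.isLt, ?_, ?_⟩ <;> simp only <;> omega
        rw [skewF, dif_pos hcell]
        simp only
        have hrw : (⟨((((i : ℕ), (c + (i : ℕ)).toNat)) : ℕ × ℕ).1,
            (hP ⟨_, hcell⟩).1⟩ : Fin l) = i := by
          apply Fin.val_injective
          rfl
        rw [hrw]
        congr 1
        simp only [content]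
        omega
      rw [pathOf_congr n _ _ hcongr, pathOf_letterOf (hpi i)]
  · -- weights
    intro T hT
    rw [mem_filter] at hT
    obtain ⟨-, hrow, hcol⟩ := hT
    have hwt : ∀ i : Fin l,
        wtp X (pathOf n (skewF T (i : ℕ)) ((mu (i : ℕ) : ℤ) - (i : ℕ))
          ((lam (i : ℕ) : ℤ) - (i : ℕ))) =
        ∏ c ∈ Finset.Ico ((mu (i : ℕ) : ℤ) - (i : ℕ)) ((lam (i : ℕ) : ℤ) - (i : ℕ)),
          XN n X (skewF T (i : ℕ) c) c := by
      intro i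
      obtain ⟨hmono, hlt⟩ := skewF_facts hlam hrow (i := (i : ℕ)) i.isLt
      have hpm := pathOf_mem n (skewF T (i : ℕ)) (a := (mu (i : ℕ) : ℤ) - (i : ℕ))
        (b := (lam (i : ℕ) : ℤ) - (i : ℕ)) (by have := hsub (i : ℕ); omega) hlt
      obtain ⟨hm, h0, hl⟩ := mem_pathsF.1 hpm
      rw [wtp_eq X hm, h0, hl]
      exact Finset.prod_congr rfl fun c hc => by rw [letterOf_pathOf n hmono hlt hc]
    rw [Finset.prod_congr rfl fun i (_ : i ∈ Finset.univ) => hwt i, Finset.prod_sigma']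
    rw [Finset.univ_eq_attach]
    apply Finset.prod_bij (i := fun (p : {p // p ∈ skewCells lam mu l})
      (_ : p ∈ (skewCells lam mu l).attach) =>
      (⟨⟨(p : ℕ × ℕ).1, (hP p).1⟩, content (p : ℕ × ℕ)⟩ : Σ _ : Fin l, ℤ))
    · intro p _
      rw [Finset.mem_sigma]
      refine ⟨mem_univ _, ?_⟩
      obtain ⟨h1, h2, h3⟩ := hP p
      rw [mem_Ico]
      simp only [content]
      constructor <;> omega
    · intro p _ q _ h
      obtain ⟨⟨pi, pj⟩, hp⟩ := p
      obtain ⟨⟨qi, qj⟩, hq⟩ := q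
      have hfst := congrArg (fun z => ((z.1 : Fin l) : ℕ)) h
      have hsnd := congrArg (fun z => z.2) h
      simp only [content] at hfst hsnd
      apply Subtype.ext
      apply Prod.ext
      · exact hfst
      · simp only at hfst hsnd ⊢
        omega
    · intro x hx
      obtain ⟨i, c⟩ := x
      rw [Finset.mem_sigma, mem_Ico] at hx
      dsimp only at hx
      have hcell : ((i : ℕ), (c + (i : ℕ)).toNat) ∈ skewCells lam mu l := by
        rw [mem_skewCells hlam]
        refine ⟨i.isLt, ?_, ?_⟩ <;> simp only <;> omega
      refine ⟨⟨_, hcell⟩, mem_attach _ _, ?_⟩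
      have h2 : content ((((i : ℕ), (c + (i : ℕ)).toNat)) : ℕ × ℕ) = c := by
        simp only [content]
        omega
      rw [h2]
    · intro p _
      obtain ⟨⟨pi, pj⟩, hp⟩ := p
      obtain ⟨hpi, hpj1, hpj2⟩ := (mem_skewCells hlam).1 hp
      simp only at hpi hpj1 hpj2
      have e1 : skewF T pi (content (pi, pj)) = (T ⟨(pi, pj), hp⟩ : ℕ) := by
        rw [skewF, show ((content (pi, pj) + (pi : ℤ)).toNat) = pj by
            simp only [content]; omega,
          dif_pos hp]
      show X (T ⟨(pi, pj), hp⟩) (content (pi, pj)) =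
        XN n X (skewF T pi (content (pi, pj))) (content (pi, pj))
      rw [e1, XN_coe]

end SkewMain

end JTaux

/-- **Jacobi–Trudi type identity for ninth variation skew Schur functions.**
For partitions `μ ⊆ λ` of length at most `l`,
`s_{λ/μ}(X) = det( h_{λ_i - μ_j - i + j}(τ^{μ_j - j + 1} X) )_{1 ≤ i,j ≤ l}`
(stated with 0-indexed parts, so the shift exponent `μ_j - j + 1` becomes
`mu j - j` for `j : Fin l`). -/


theorem jacobiTrudi_ninthVariation {R : Type*} [CommRing R] (n l : ℕ) (lam mu : ℕ → ℕ)
    (hlam : Antitone lam) (hmu : Antitone mu) (hsub : ∀ i, mu i ≤ lam i)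
    (hlen : ∀ i, l ≤ i → lam i = 0) (X : Fin n → ℤ → R) :
    schurGen n (skewCells lam mu l) X =
      Matrix.det (Matrix.of fun i j : Fin l =>
        hGen n ((lam (i : ℕ) : ℤ) - (mu (j : ℕ) : ℤ) - (i : ℕ) + (j : ℕ))
          ((mu (j : ℕ) : ℤ) - (j : ℕ)) X) := by
  classical
  rw [JTaux.skew_eq n l lam mu hlam hmu hsub X, Matrix.det_apply']
  set Ast : Fin l → ℤ := fun i => (mu (i : ℕ) : ℤ) - (i : ℕ) with hAst
  set Bnd : Fin l → ℤ := fun i => (lam (i : ℕ) : ℤ) - (i : ℕ) with hBnd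
  have hA : ∀ i j : Fin l, i < j → Ast j < Ast i := by
    intro i j hij
    have h1 := hmu (le_of_lt (Fin.lt_def.mp hij))
    have h2 := Fin.lt_def.mp hij
    simp only [hAst]
    omega
  have hB : ∀ i j : Fin l, i < j → Bnd j < Bnd i := by
    intro i j hij
    have h1 := hlam (le_of_lt (Fin.lt_def.mp hij))
    have h2 := Fin.lt_def.mp hij
    simp only [hBnd]
    omega
  have hterm : ∀ σ : Equiv.Perm (Fin l),
      (∏ i : Fin l, Matrix.of (fun i j : Fin l =>
        hGen n ((lam (i : ℕ) : ℤ) - (mu (j : ℕ) : ℤ) - (i : ℕ) + (j : ℕ))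
          ((mu (j : ℕ) : ℤ) - (j : ℕ)) X) (σ i) i)
      = ∑ G ∈ Fintype.piFinset (fun i : Fin l => JTaux.pathsF n (Ast i) (Bnd (σ i))),
          ∏ i, JTaux.wtp X (G i) := by
    intro σ
    have hent : ∀ i : Fin l, Matrix.of (fun i j : Fin l =>
        hGen n ((lam (i : ℕ) : ℤ) - (mu (j : ℕ) : ℤ) - (i : ℕ) + (j : ℕ))
          ((mu (j : ℕ) : ℤ) - (j : ℕ)) X) (σ i) i
        = ∑ g ∈ JTaux.pathsF n (Ast i) (Bnd (σ i)), JTaux.wtp X g := by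
      intro i
      rw [Matrix.of_apply, JTaux.hGen_eq]
      congr 1
      rw [hAst, hBnd]
      congr 1
      push_cast
      ring
    rw [Finset.prod_congr rfl (fun i _ => hent i), Finset.prod_univ_sum]
  rw [Finset.sum_congr rfl (fun σ (_ : σ ∈ Finset.univ) => by rw [hterm σ, Finset.mul_sum])]
  rw [Finset.sum_sigma']
  rw [← Finset.sum_filter_add_sum_filter_not
    ((Finset.univ : Finset (Equiv.Perm (Fin l))).sigma fun σ =>
      Fintype.piFinset fun i => JTaux.pathsF n (Ast i) (Bnd (σ i)))
    (fun x => JTaux.CrossF x.2), JTaux.cross_cancel X Ast Bnd, zero_add]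
  apply Finset.sum_bij (i := fun (G : Fin l → Fin (n+1) → ℤ)
    (_ : G ∈ (Fintype.piFinset fun i : Fin l => JTaux.pathsF n (Ast i) (Bnd i)).filter
      (fun G => ¬ JTaux.CrossF G)) =>
    (⟨1, G⟩ : Σ _ : Equiv.Perm (Fin l), (Fin l → Fin (n+1) → ℤ)))
  · intro G hG
    rw [Finset.mem_filter] at hG ⊢
    obtain ⟨hpi, hnc⟩ := hG
    refine ⟨Finset.mem_sigma.2 ⟨Finset.mem_univ _, ?_⟩, hnc⟩
    rw [Fintype.mem_piFinset] at hpi ⊢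
    intro i
    simpa using hpi i
  · intro G hG G' hG' h
    exact congrArg (fun z : Σ _ : Equiv.Perm (Fin l), (Fin l → Fin (n+1) → ℤ) => z.2) h
  · intro x hx
    rw [Finset.mem_filter, Finset.mem_sigma] at hx
    obtain ⟨⟨-, hpi⟩, hnc⟩ := hx
    rw [Fintype.mem_piFinset] at hpi
    have hGm : ∀ i, Monotone (x.2 i) := fun i => (JTaux.mem_pathsF.1 (hpi i)).1
    have hG0 : ∀ i, x.2 i 0 = Ast i := fun i => (JTaux.mem_pathsF.1 (hpi i)).2.1
    have hGl : ∀ i, x.2 i (Fin.last n) = Bnd (x.1 i) := fun i => (JTaux.mem_pathsF.1 (hpi i)).2.2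
    have hone : x.1 = 1 := JTaux.noncross_id Ast Bnd hA hB x.1 x.2 hGm hG0 hGl hnc
    refine ⟨x.2, ?_, ?_⟩
    · rw [Finset.mem_filter]
      refine ⟨?_, hnc⟩
      rw [Fintype.mem_piFinset]
      intro i
      have := hpi i
      rw [hone] at this
      simpa using this
    · rw [← hone]
  · intro G hG
    rw [Equiv.Perm.sign_one]
    simp
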